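/- arXiv:1303.2259 — 3 statements merged into one kernel-verified Lean document; each statement's English description precedes it below -/
import Mathlib

section
/- ∫₀¹ K'(k)³ dk = (10/3)·∫₀¹ K(k)³ dk, where K is the complete elliptic integral of the first kind and K'(k) = K(√(1−k²)). -/
noncomputable def EllK (k : ℝ) : ℝ := ∫ u in (0:ℝ)..1, 1 / Real.sqrt ((1 - u^2) * (1 - k^2 * u^2))

noncomputable def EllK' (k : ℝ) : ℝ := EllK (Real.sqrt (1 - k^2))

open Real MeasureTheory Set Filter Topology intervalIntegral

namespace Wan



noncomputable def F (κ u : ℝ) : ℝ := 1 / Real.sqrt ((1 - u^2) * (1 - κ^2 * u^2))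

lemma F_nonneg (κ u : ℝ) : 0 ≤ F κ u := by unfold F; positivity

lemma EllK_eq (κ : ℝ) : EllK κ = ∫ u in (0:ℝ)..1, F κ u := rfl

lemma F_measurable (κ : ℝ) : Measurable (F κ) := by
  unfold F
  exact measurable_const.div ((continuous_const.sub (continuous_pow 2)).mul
    (continuous_const.sub (continuous_const.mul (continuous_pow 2)))).sqrt.measurable

lemma prod_lb {κ u : ℝ} (hκ0 : 0 ≤ κ) (hκ1 : κ ≤ 1) (hu0 : 0 ≤ u) (hu1 : u ≤ 1) :
    (1 - u) * (1 - κ^2) ≤ (1 - u^2) * (1 - κ^2 * u^2) := by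
  have hκu : κ^2 * u ≤ 1 := by nlinarith
  have e1 : 0 ≤ u * (1 - κ^2*u) := mul_nonneg hu0 (by nlinarith)
  have hu3 : u^3 ≤ 1 := pow_le_one₀ hu0 hu1
  have e2 : 0 ≤ κ^2 * (1 - u^3) := mul_nonneg (sq_nonneg κ) (by linarith)
  have h2 : (1 - κ^2) ≤ (1+u) * (1 - κ^2*u^2) := by nlinarith
  have h3 := mul_le_mul_of_nonneg_left h2 (show (0:ℝ) ≤ 1 - u by linarith)
  nlinarith [h3]

lemma F_le {κ u : ℝ} (hκ0 : 0 ≤ κ) (hκ1 : κ < 1) (hu0 : 0 ≤ u) (hu1 : u ≤ 1) :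
    F κ u ≤ (1 / Real.sqrt (1 - κ^2)) * (1 / Real.sqrt (1 - u)) := by
  have h1 : (0:ℝ) < 1 - κ^2 := by nlinarith
  rcases eq_or_lt_of_le hu1 with h | h
  · subst h; simp [F]
  · have h2 : (0:ℝ) < 1 - u := by linarith
    have hlb := prod_lb hκ0 hκ1.le hu0 hu1
    have hpos : (0:ℝ) < (1 - u) * (1 - κ^2) := by positivity
    rw [one_div_mul_one_div, ← Real.sqrt_mul h1.le]
    unfold F
    apply one_div_le_one_div_of_le
    · rw [show (1-κ^2)*(1-u) = (1-u)*(1-κ^2) by ring]; exact Real.sqrt_pos.2 hpos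
    · rw [show (1-κ^2)*(1-u) = (1-u)*(1-κ^2) by ring]
      exact Real.sqrt_le_sqrt hlb

lemma integrable_one_div_sqrt_one_sub :
    IntervalIntegrable (fun u : ℝ => 1 / Real.sqrt (1 - u)) volume 0 1 := by
  have h : IntervalIntegrable (fun x : ℝ => x ^ (-(1/2) : ℝ)) volume 0 1 :=
    intervalIntegral.intervalIntegrable_rpow' (by norm_num)
  have h2 := (h.comp_sub_left 1).symm
  norm_num at h2
  apply h2.congr_ae
  rw [Filter.EventuallyEq, ae_restrict_iff' measurableSet_uIoc]
  filter_upwards with u hu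
  rw [Set.uIoc_of_le (by norm_num : (0:ℝ) ≤ 1)] at hu
  have h0 : (0:ℝ) ≤ 1 - u := by linarith [hu.2]
  rw [Real.rpow_neg h0, Real.sqrt_eq_rpow, one_div, one_div]

lemma intervalIntegrable_F {κ : ℝ} (hκ0 : 0 ≤ κ) (hκ1 : κ < 1) :
    IntervalIntegrable (F κ) volume 0 1 := by
  have hmaj : IntervalIntegrable (fun u : ℝ => (1 / Real.sqrt (1 - κ^2)) * (1 / Real.sqrt (1 - u))) volume 0 1 :=
    (integrable_one_div_sqrt_one_sub.const_mul _)
  apply hmaj.mono_fun ((F_measurable κ).aestronglyMeasurable)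
  rw [Filter.EventuallyLE, ae_restrict_iff' measurableSet_uIoc]
  filter_upwards with u hu
  rw [Set.uIoc_of_le (by norm_num : (0:ℝ) ≤ 1)] at hu
  have h1 : (0:ℝ) < 1 - κ^2 := by nlinarith
  rw [Real.norm_of_nonneg (F_nonneg κ u), Real.norm_of_nonneg (by positivity)]
  exact F_le hκ0 hκ1 hu.1.le hu.2

lemma EllK_nonneg (κ : ℝ) : 0 ≤ EllK κ := by
  rw [EllK_eq]
  exact intervalIntegral.integral_nonneg (by norm_num) (fun u _ => F_nonneg κ u)



lemma F_le_one_div {κ u : ℝ} (hκ1 : κ ≤ 1) (hu0 : 0 ≤ u) (hu1 : u < 1) (hκ0 : 0 ≤ κ) :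
    F κ u ≤ 1 / (1 - u^2) := by
  have h2 : (0:ℝ) < 1 - u^2 := by nlinarith
  have hk2 : (0:ℝ) ≤ 1 - κ^2 := by nlinarith
  have hq : (1-u^2)^2 ≤ (1 - u^2) * (1 - κ^2 * u^2) := by
    nlinarith [mul_nonneg (mul_nonneg h2.le (sq_nonneg u)) hk2]
  have hs : (1 - u^2) ≤ Real.sqrt ((1 - u^2) * (1 - κ^2 * u^2)) := by
    have := Real.sqrt_le_sqrt hq
    rwa [Real.sqrt_sq h2.le] at this
  unfold F
  exact one_div_le_one_div_of_le h2 hs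

lemma integral_one_div_one_sub_sq {κ : ℝ} (hκ0 : 0 ≤ κ) (hκ1 : κ < 1) :
    ∫ u in (0:ℝ)..κ, 1 / (1 - u^2) = (1/2) * (Real.log (1+κ) - Real.log (1-κ)) := by
  have h := intervalIntegral.integral_eq_sub_of_hasDerivAt
    (f := fun u : ℝ => (1/2) * (Real.log (1+u) - Real.log (1-u)))
    (f' := fun u : ℝ => 1 / (1 - u^2)) (a := 0) (b := κ) ?_ ?_
  · rw [h]; simp
  · intro x hx
    rw [Set.uIcc_of_le hκ0] at hx
    have hx0 : (0:ℝ) < 1 + x := by linarith [hx.1]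
    have hx1 : (0:ℝ) < 1 - x := by linarith [hx.2]
    have d1 : HasDerivAt (fun y : ℝ => Real.log (1+y)) (1/(1+x)) x := by
      have := (Real.hasDerivAt_log hx0.ne').comp x ((hasDerivAt_id x).const_add 1)
      simpa [one_div, Function.comp_def] using this
    have d2 : HasDerivAt (fun y : ℝ => Real.log (1-y)) (-(1/(1-x))) x := by
      have := (Real.hasDerivAt_log hx1.ne').comp x ((hasDerivAt_const x (1:ℝ)).sub (hasDerivAt_id x))
      simpa [one_div, Function.comp_def] using this
    have hd := ((d1.sub d2).const_mul (1/2 : ℝ))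
    have heq : (1/2 : ℝ) * (1/(1+x) - -(1/(1-x))) = 1 / (1 - x^2) := by
      rw [show (1 - x^2) = (1+x)*(1-x) by ring]
      field_simp
      ring
    rw [heq] at hd
    exact hd
  · apply ContinuousOn.intervalIntegrable
    apply ContinuousOn.div continuousOn_const
    · fun_prop
    · intro x hx
      rw [Set.uIcc_of_le hκ0] at hx
      nlinarith [hx.1, hx.2]

lemma integral_one_div_sqrt_one_sub_from {κ : ℝ} (hκ0 : 0 ≤ κ) (hκ1 : κ ≤ 1) :
    ∫ u in κ..1, 1 / Real.sqrt (1 - u) = 2 * Real.sqrt (1 - κ) := by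
  have h := intervalIntegral.integral_eq_sub_of_hasDeriv_right_of_le
    (f := fun u : ℝ => -(2 * Real.sqrt (1 - u)))
    (f' := fun u : ℝ => 1 / Real.sqrt (1 - u)) hκ1 ?_ ?_ ?_
  · rw [h]; simp
  · fun_prop
  · intro x hx
    have hx1 : (0:ℝ) < 1 - x := by linarith [hx.2]
    have hs : (0:ℝ) < Real.sqrt (1-x) := Real.sqrt_pos.2 hx1
    have d0 : HasDerivAt (fun u : ℝ => 1 - u) (-1) x := by
      simpa [Pi.sub_def] using (hasDerivAt_const x (1:ℝ)).sub (hasDerivAt_id x)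
    have d1 := (Real.hasDerivAt_sqrt hx1.ne').comp x d0
    have d3 := (d1.const_mul (2:ℝ)).neg
    simp only [Function.comp_def] at d3
    have hval : -((2:ℝ) * (1 / (2 * Real.sqrt (1-x)) * -1)) = 1 / Real.sqrt (1-x) := by
      field_simp
    rw [hval] at d3
    exact d3.hasDerivWithinAt
  · exact integrable_one_div_sqrt_one_sub.mono_set (by
      rw [Set.uIcc_of_le hκ1, Set.uIcc_of_le (by norm_num : (0:ℝ) ≤ 1)]
      exact Set.Icc_subset_Icc hκ0 le_rfl)

lemma EllK_le {κ : ℝ} (hκ0 : 0 ≤ κ) (hκ1 : κ < 1) :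
    EllK κ ≤ 2 + (1/2) * (Real.log (1+κ) - Real.log (1-κ)) := by
  have hint := intervalIntegrable_F hκ0 hκ1
  have hi1 : IntervalIntegrable (F κ) volume 0 κ := hint.mono_set (by
    rw [Set.uIcc_of_le hκ0, Set.uIcc_of_le (by norm_num : (0:ℝ) ≤ 1)]
    exact Set.Icc_subset_Icc le_rfl hκ1.le)
  have hi2 : IntervalIntegrable (F κ) volume κ 1 := hint.mono_set (by
    rw [Set.uIcc_of_le hκ1.le, Set.uIcc_of_le (by norm_num : (0:ℝ) ≤ 1)]
    exact Set.Icc_subset_Icc hκ0 le_rfl)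
  have hsplit : EllK κ = (∫ u in (0:ℝ)..κ, F κ u) + ∫ u in κ..(1:ℝ), F κ u := by
    rw [EllK_eq, ← intervalIntegral.integral_add_adjacent_intervals hi1 hi2]
  -- part 1
  have hp1 : (∫ u in (0:ℝ)..κ, F κ u) ≤ (1/2) * (Real.log (1+κ) - Real.log (1-κ)) := by
    rw [← integral_one_div_one_sub_sq hκ0 hκ1]
    apply intervalIntegral.integral_mono_on hκ0 hi1
    · apply ContinuousOn.intervalIntegrable
      apply ContinuousOn.div continuousOn_const
      · fun_prop
      · intro x hx
        rw [Set.uIcc_of_le hκ0] at hx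
        nlinarith [hx.1, hx.2]
    · intro x hx
      exact F_le_one_div hκ1.le hx.1 (lt_of_le_of_lt hx.2 hκ1) hκ0
  -- part 2
  have hp2 : (∫ u in κ..(1:ℝ), F κ u) ≤ 2 := by
    have hmono : (∫ u in κ..(1:ℝ), F κ u) ≤
        ∫ u in κ..(1:ℝ), (1 / Real.sqrt (1 - κ^2)) * (1 / Real.sqrt (1 - u)) := by
      apply intervalIntegral.integral_mono_on hκ1.le hi2
      · exact (integrable_one_div_sqrt_one_sub.mono_set (by
          rw [Set.uIcc_of_le hκ1.le, Set.uIcc_of_le (by norm_num : (0:ℝ) ≤ 1)]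
          exact Set.Icc_subset_Icc hκ0 le_rfl)).const_mul _
      · intro x hx
        exact F_le hκ0 hκ1 (le_trans hκ0 hx.1) hx.2
    rw [intervalIntegral.integral_const_mul, integral_one_div_sqrt_one_sub_from hκ0 hκ1.le] at hmono
    have hval : (1 / Real.sqrt (1 - κ^2)) * (2 * Real.sqrt (1-κ)) ≤ 2 := by
      have h1 : Real.sqrt (1-κ^2) = Real.sqrt (1-κ) * Real.sqrt (1+κ) := by
        rw [← Real.sqrt_mul (by linarith)]; ring_nf
      have h2 : (0:ℝ) < Real.sqrt (1-κ) := Real.sqrt_pos.2 (by linarith)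
      have h3 : (1:ℝ) ≤ Real.sqrt (1+κ) := by
        nlinarith [Real.sq_sqrt (show (0:ℝ) ≤ 1+κ by linarith), Real.sqrt_nonneg (1+κ)]
      rw [h1]
      rw [div_mul_eq_mul_div, one_mul]
      rw [div_le_iff₀ (by positivity)]
      calc 2 * Real.sqrt (1-κ) = 2 * (Real.sqrt (1-κ) * 1) := by ring
        _ ≤ 2 * (Real.sqrt (1-κ) * Real.sqrt (1+κ)) := by
            apply mul_le_mul_of_nonneg_left _ (by norm_num)
            exact mul_le_mul_of_nonneg_left h3 h2.le
        _ = 2 * (Real.sqrt (1-κ) * Real.sqrt (1+κ)) * 1 := by ring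
        _ ≤ 2 * (Real.sqrt (1-κ) * Real.sqrt (1+κ)) := by norm_num
    linarith [hmono, hval]
  linarith [hp1, hp2, hsplit.le, hsplit.ge]

lemma cube_exp_bound {y : ℝ} (hy : 0 ≤ y) : y^3 ≤ 48 * Real.exp (y/2) := by
  have hx : (0:ℝ) ≤ y/2 := by linarith
  have hsum := Real.sum_le_exp_of_nonneg hx 4
  simp [Finset.sum_range_succ, Nat.factorial] at hsum
  nlinarith [sq_nonneg y, pow_nonneg hy 3, sq_nonneg (y/2)]

lemma exp_32_le : Real.exp ((3:ℝ)/2) ≤ 4.5 := by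
  have h1 : Real.exp 1 < 2.7182818286 := Real.exp_one_lt_d9
  have h3 : Real.exp (3:ℝ) < 20.25 := by
    have he : Real.exp (3:ℝ) = (Real.exp 1)^3 := by
      rw [show (3:ℝ) = ((3:ℕ):ℝ) * 1 by norm_num, Real.exp_nat_mul]
    rw [he]
    have h2 : Real.exp 1 ≤ 2.72 := by linarith
    have h3 := pow_le_pow_left₀ (Real.exp_pos 1).le h2 3
    norm_num at h3 ⊢
    linarith
  have h2 : Real.exp ((3:ℝ)/2) * Real.exp ((3:ℝ)/2) = Real.exp 3 := by
    rw [← Real.exp_add]; norm_num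
  nlinarith [Real.exp_pos ((3:ℝ)/2)]

lemma EllK_le' {κ : ℝ} (hκ0 : 0 ≤ κ) (hκ1 : κ < 1) :
    EllK κ ≤ 3 + (- Real.log (1-κ))/2 := by
  have h := EllK_le hκ0 hκ1
  have hlog : Real.log (1+κ) ≤ 1 := by
    have := Real.log_le_sub_one_of_pos (show (0:ℝ) < 1+κ by linarith)
    linarith
  linarith

lemma EllK_cube_le {κ : ℝ} (hκ0 : 0 ≤ κ) (hκ1 : κ < 1) :
    (EllK κ)^3 ≤ 216 * (1-κ) ^ (-(1/4) : ℝ) := by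
  set t : ℝ := - Real.log (1-κ) with ht
  have h1κ : (0:ℝ) < 1 - κ := by linarith
  have htnn : 0 ≤ t := by
    rw [ht, neg_nonneg]
    exact Real.log_nonpos h1κ.le (by linarith)
  have hb := EllK_le' hκ0 hκ1
  have hy : (0:ℝ) ≤ 3 + t/2 := by linarith
  have hcube : (EllK κ)^3 ≤ (3 + t/2)^3 := by
    have h0 := EllK_nonneg κ
    have : EllK κ ≤ 3 + t/2 := by linarith
    exact pow_le_pow_left₀ h0 this 3
  have h48 : (3 + t/2)^3 ≤ 48 * Real.exp ((3 + t/2)/2) := cube_exp_bound hy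
  have hsplit : Real.exp ((3 + t/2)/2) = Real.exp ((3:ℝ)/2) * Real.exp (t/4) := by
    rw [← Real.exp_add]; ring_nf
  have hrpow : Real.exp (t/4) = (1-κ) ^ (-(1/4) : ℝ) := by
    rw [Real.rpow_def_of_pos h1κ, ht]
    ring_nf
  have hexp : Real.exp ((3:ℝ)/2) ≤ 4.5 := exp_32_le
  have hpos : (0:ℝ) < Real.exp (t/4) := Real.exp_pos _
  calc (EllK κ)^3 ≤ 48 * Real.exp ((3 + t/2)/2) := le_trans hcube h48
    _ = 48 * (Real.exp ((3:ℝ)/2) * Real.exp (t/4)) := by rw [hsplit]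
    _ ≤ 48 * (4.5 * Real.exp (t/4)) := by nlinarith
    _ = 216 * Real.exp (t/4) := by ring
    _ = 216 * (1-κ) ^ (-(1/4) : ℝ) := by rw [hrpow]

lemma sqrt_one_sub_sq_lt_one {k : ℝ} (hk0 : 0 < k) (hk1 : k ≤ 1) :
    Real.sqrt (1 - k^2) < 1 := by
  have h : 1 - k^2 < 1 := by nlinarith
  have h0 : (0:ℝ) ≤ 1 - k^2 := by nlinarith
  calc Real.sqrt (1 - k^2) < Real.sqrt 1 := Real.sqrt_lt_sqrt h0 h
    _ = 1 := Real.sqrt_one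

lemma one_sub_sqrt_ge {k : ℝ} (hk0 : 0 < k) (hk1 : k ≤ 1) :
    k^2/2 ≤ 1 - Real.sqrt (1 - k^2) := by
  have h : Real.sqrt (1 - k^2) ≤ 1 - k^2/2 := by
    rw [Real.sqrt_le_iff]
    constructor
    · nlinarith
    · nlinarith [sq_nonneg k, pow_nonneg (sq_nonneg k) 2, sq_nonneg (k^2)]
  linarith

lemma EllK'_cube_le {k : ℝ} (hk0 : 0 < k) (hk1 : k ≤ 1) :
    (EllK' k)^3 ≤ 432 * k ^ (-(1/2) : ℝ) := by
  have hκ0 : 0 ≤ Real.sqrt (1 - k^2) := Real.sqrt_nonneg _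
  have hκ1 : Real.sqrt (1 - k^2) < 1 := sqrt_one_sub_sq_lt_one hk0 hk1
  have h1 := EllK_cube_le hκ0 hκ1
  have hge := one_sub_sqrt_ge hk0 hk1
  have hk2 : (0:ℝ) < k^2/2 := by positivity
  have hmono : (1 - Real.sqrt (1 - k^2)) ^ (-(1/4) : ℝ) ≤ (k^2/2) ^ (-(1/4) : ℝ) :=
    Real.rpow_le_rpow_of_nonpos hk2 hge (by norm_num)
  have hval : (k^2/2) ^ (-(1/4) : ℝ) ≤ 2 * k ^ (-(1/2) : ℝ) := by
    have e1 : (k^2/2 : ℝ) = k^2 * (2:ℝ)⁻¹ := by ring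
    rw [e1, Real.mul_rpow (by positivity) (by norm_num)]
    have e2 : ((k^2 : ℝ)) ^ (-(1/4) : ℝ) = k ^ (-(1/2) : ℝ) := by
      rw [← Real.rpow_natCast k 2, ← Real.rpow_mul hk0.le]
      norm_num
    rw [e2]
    have e3 : ((2:ℝ)⁻¹) ^ (-(1/4) : ℝ) ≤ 2 := by
      rw [← Real.rpow_neg_one (2:ℝ), ← Real.rpow_mul (by norm_num)]
      norm_num
      calc (2:ℝ) ^ ((1:ℝ)/4) ≤ (2:ℝ) ^ ((1:ℝ)) := by
            apply Real.rpow_le_rpow_of_exponent_le (by norm_num) (by norm_num)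
        _ = 2 := Real.rpow_one 2
    have hk' : (0:ℝ) ≤ k ^ (-(1/2) : ℝ) := Real.rpow_nonneg hk0.le _
    calc k ^ (-(1/2) : ℝ) * ((2:ℝ)⁻¹) ^ (-(1/4) : ℝ) ≤ k ^ (-(1/2) : ℝ) * 2 :=
          mul_le_mul_of_nonneg_left e3 hk'
      _ = 2 * k ^ (-(1/2) : ℝ) := by ring
  unfold EllK'
  calc (EllK (Real.sqrt (1 - k^2)))^3 ≤ 216 * (1 - Real.sqrt (1 - k^2)) ^ (-(1/4) : ℝ) := h1
    _ ≤ 216 * (k^2/2) ^ (-(1/4) : ℝ) := by nlinarith [hmono]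
    _ ≤ 216 * (2 * k ^ (-(1/2) : ℝ)) := by nlinarith [hval]
    _ = 432 * k ^ (-(1/2) : ℝ) := by ring

lemma EllK'_nonneg (k : ℝ) : 0 ≤ EllK' k := EllK_nonneg _


lemma F_le' {b x u : ℝ} (hb0 : 0 ≤ b) (hb1 : b < 1) (hxb : x^2 ≤ b^2)
    (hu0 : 0 ≤ u) (hu1 : u ≤ 1) :
    F x u ≤ (1 / Real.sqrt (1 - b^2)) * (1 / Real.sqrt (1 - u)) := by
  have h1 : (0:ℝ) < 1 - b^2 := by nlinarith
  have hu2 : (0:ℝ) ≤ 1 - u^2 := by nlinarith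
  have hlb : (1 - u) * (1 - b^2) ≤ (1 - u^2) * (1 - x^2 * u^2) := by
    have h2 := prod_lb hb0 hb1.le hu0 hu1
    nlinarith [mul_nonneg hu2 (mul_nonneg (sub_nonneg.2 hxb) (sq_nonneg u))]
  rcases eq_or_lt_of_le hu1 with h | h
  · subst h; simp [F]
  · have h2 : (0:ℝ) < 1 - u := by linarith
    rw [one_div_mul_one_div, ← Real.sqrt_mul h1.le]
    unfold F
    apply one_div_le_one_div_of_le
    · rw [show (1-b^2)*(1-u) = (1-u)*(1-b^2) by ring]
      exact Real.sqrt_pos.2 (by positivity)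
    · rw [show (1-b^2)*(1-u) = (1-u)*(1-b^2) by ring]
      exact Real.sqrt_le_sqrt hlb

lemma EllK_Ioc (κ : ℝ) : EllK κ = ∫ u in Ioc (0:ℝ) 1, F κ u := by
  rw [EllK_eq, intervalIntegral.integral_of_le (by norm_num : (0:ℝ) ≤ 1)]

lemma EllK_continuousAt {κ₀ : ℝ} (h0 : 0 ≤ κ₀) (h1 : κ₀ < 1) : ContinuousAt EllK κ₀ := by
  set b : ℝ := (1 + κ₀)/2 with hbdef
  have hκb : κ₀ < b := by rw [hbdef]; linarith
  have hb1 : b < 1 := by rw [hbdef]; linarith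
  have hb0 : 0 ≤ b := by rw [hbdef]; linarith
  have key : ContinuousAt (fun x => ∫ u in Ioc (0:ℝ) 1, F x u) κ₀ := by
    apply MeasureTheory.continuousAt_of_dominated
      (bound := fun u => (1 / Real.sqrt (1 - b^2)) * (1 / Real.sqrt (1 - u)))
    · exact Eventually.of_forall fun x => (F_measurable x).aestronglyMeasurable
    · have hev : ∀ᶠ x in 𝓝 κ₀, x ∈ Ioo (2*κ₀ - b) b :=
        Ioo_mem_nhds (by linarith) hκb
      filter_upwards [hev] with x hx
      rw [ae_restrict_iff' measurableSet_Ioc]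
      filter_upwards with u hu
      rw [Real.norm_of_nonneg (F_nonneg _ _)]
      have hxb : x^2 ≤ b^2 := by nlinarith [hx.1, hx.2]
      exact F_le' hb0 hb1 hxb hu.1.le hu.2
    · exact (integrable_one_div_sqrt_one_sub.const_mul _).1
    · have h1 : ∀ᵐ u ∂(volume.restrict (Ioc (0:ℝ) 1)), u ∈ Ioo (0:ℝ) 1 := by
        rw [← Measure.restrict_congr_set Ioo_ae_eq_Ioc]
        exact ae_restrict_mem measurableSet_Ioo
      filter_upwards [h1] with u hu
      unfold F
      apply ContinuousAt.div continuousAt_const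
      · have hc : Continuous fun x : ℝ => Real.sqrt ((1 - u^2) * (1 - x^2 * u^2)) := by
          fun_prop
        exact hc.continuousAt
      · have hu1 : u < 1 := hu.2
        have hu0 : 0 < u := hu.1
        have hpos : (0:ℝ) < (1 - u^2) * (1 - κ₀^2 * u^2) := by
          have hku : κ₀ * u < 1 := by nlinarith
          have h2 : κ₀^2 * u^2 < 1 := by nlinarith [mul_nonneg h0 hu0.le, sq_nonneg (κ₀*u)]
          have h3 : (0:ℝ) < 1 - u^2 := by nlinarith
          have h4 : (0:ℝ) < 1 - κ₀^2*u^2 := by nlinarith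
          positivity
        exact (Real.sqrt_pos.2 hpos).ne'
  exact key.congr (Eventually.of_forall fun x => (EllK_Ioc x).symm)

lemma EllK_continuousOn : ContinuousOn EllK (Ioo 0 1) := fun κ hκ =>
  (EllK_continuousAt hκ.1.le hκ.2).continuousWithinAt

lemma EllK'_continuousOn : ContinuousOn EllK' (Ioo 0 1) := by
  intro k hk
  have hκ0 : (0:ℝ) < 1 - k^2 := by nlinarith [hk.1, hk.2]
  have h1 : ContinuousAt (fun k : ℝ => Real.sqrt (1 - k^2)) k := by fun_prop
  have h2 : ContinuousAt EllK (Real.sqrt (1 - k^2)) :=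
    EllK_continuousAt (Real.sqrt_nonneg _) (sqrt_one_sub_sq_lt_one hk.1 hk.2.le)
  exact ((h2.comp (f := fun k : ℝ => Real.sqrt (1 - k^2)) h1)).continuousWithinAt

/-- generic: interval integrability via continuity on the open interval and an integrable bound -/
lemma intervalIntegrable_of_bound {a b : ℝ} (hab : a ≤ b) (f g : ℝ → ℝ)
    (hg : IntervalIntegrable g volume a b)
    (hf : ContinuousOn f (Ioo a b))
    (hbd : ∀ x ∈ Ioo a b, ‖f x‖ ≤ ‖g x‖) : IntervalIntegrable f volume a b := by
  have hmeas : AEStronglyMeasurable f (volume.restrict (Ioc a b)) := by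
    have h0 : AEStronglyMeasurable f (volume.restrict (Ioo a b)) :=
      hf.aestronglyMeasurable measurableSet_Ioo
    rwa [Measure.restrict_congr_set Ioo_ae_eq_Ioc] at h0
  have hae : ∀ᵐ x ∂(volume.restrict (Ioc a b)), x ∈ Ioo a b := by
    rw [← Measure.restrict_congr_set Ioo_ae_eq_Ioc]
    exact ae_restrict_mem measurableSet_Ioo
  apply hg.mono_fun
  · rwa [Set.uIoc_of_le hab]
  · rw [Filter.EventuallyLE, Set.uIoc_of_le hab]
    filter_upwards [hae] with x hx
    exact hbd x hx

lemma II_EllK_cube : IntervalIntegrable (fun k => (EllK k)^3) volume 0 1 := by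
  have hg : IntervalIntegrable (fun k : ℝ => 216 * (1-k) ^ (-(1/4) : ℝ)) volume 0 1 := by
    have h : IntervalIntegrable (fun x : ℝ => x ^ (-(1/4) : ℝ)) volume 0 1 :=
      intervalIntegral.intervalIntegrable_rpow' (by norm_num)
    have h2 := (h.comp_sub_left 1).symm
    norm_num at h2
    exact h2.const_mul 216
  apply intervalIntegrable_of_bound (by norm_num) _ _ hg (EllK_continuousOn.pow 3)
  intro x hx
  have h1 : (0:ℝ) ≤ (EllK x)^3 := pow_nonneg (EllK_nonneg x) 3
  have h2 : (0:ℝ) ≤ 216 * (1-x) ^ (-(1/4) : ℝ) := by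
    have := Real.rpow_nonneg (show (0:ℝ) ≤ 1-x by linarith [hx.2]) (-(1/4) : ℝ)
    linarith
  simp only [Pi.pow_apply]
  rw [Real.norm_of_nonneg h1, Real.norm_of_nonneg h2]
  exact EllK_cube_le hx.1.le hx.2

lemma II_EllK'_cube : IntervalIntegrable (fun k => (EllK' k)^3) volume 0 1 := by
  have hg : IntervalIntegrable (fun k : ℝ => 432 * k ^ (-(1/2) : ℝ)) volume 0 1 :=
    (intervalIntegral.intervalIntegrable_rpow' (by norm_num)).const_mul 432
  apply intervalIntegrable_of_bound (by norm_num) _ _ hg (EllK'_continuousOn.pow 3)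
  intro x hx
  have h1 : (0:ℝ) ≤ (EllK' x)^3 := pow_nonneg (EllK_nonneg _) 3
  have h2 : (0:ℝ) ≤ 432 * x ^ (-(1/2) : ℝ) := by
    have := Real.rpow_nonneg hx.1.le (-(1/2) : ℝ); linarith
  simp only [Pi.pow_apply]
  rw [Real.norm_of_nonneg h1, Real.norm_of_nonneg h2]
  exact EllK'_cube_le hx.1 hx.2.le

lemma contOn_rpow (c : ℝ) : ContinuousOn (fun x : ℝ => x ^ c) (Ioi 0) := by
  intro x hx
  exact (Real.continuousAt_rpow_const x c (Or.inl (ne_of_gt hx))).continuousWithinAt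

lemma II_beta : IntervalIntegrable
    (fun k : ℝ => k ^ (-(1/2) : ℝ) * (1-k) ^ (-(1/2) : ℝ)) volume 0 1 := by
  have p1 : IntervalIntegrable
      (fun k : ℝ => k ^ (-(1/2) : ℝ) * (1-k) ^ (-(1/2) : ℝ)) volume 0 (1/2) := by
    have hg : IntervalIntegrable (fun k : ℝ => 2 * k ^ (-(1/2) : ℝ)) volume 0 (1/2) :=
      ((intervalIntegral.intervalIntegrable_rpow' (a := 0) (b := 1) (by norm_num)).mono_set
        (by rw [Set.uIcc_of_le, Set.uIcc_of_le] <;> [skip; norm_num; norm_num]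
            exact Set.Icc_subset_Icc le_rfl (by norm_num))).const_mul 2
    apply intervalIntegrable_of_bound (by norm_num) _ _ hg
    · apply ContinuousOn.mul
      · exact (contOn_rpow _).mono (fun x hx => hx.1)
      · intro x hx
        exact ((Real.continuousAt_rpow_const (1-x) _
          (Or.inl (by intro h; rw [sub_eq_zero] at h; linarith [hx.2] ))).comp
            (by fun_prop)).continuousWithinAt
    · intro x hx
      have hx0 := hx.1
      have hx2 : x < 1/2 := hx.2
      have hr1 : (0:ℝ) ≤ x ^ (-(1/2) : ℝ) := Real.rpow_nonneg hx0.le _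
      have hr2 : (0:ℝ) ≤ (1-x) ^ (-(1/2) : ℝ) := Real.rpow_nonneg (by linarith) _
      rw [Real.norm_of_nonneg (mul_nonneg hr1 hr2), Real.norm_of_nonneg (by positivity)]
      have hb : (1-x) ^ (-(1/2) : ℝ) ≤ ((1:ℝ)/2) ^ (-(1/2) : ℝ) :=
        Real.rpow_le_rpow_of_nonpos (by norm_num) (by linarith) (by norm_num)
      have hhalf : ((1:ℝ)/2) ^ (-(1/2) : ℝ) ≤ 2 := by
        rw [show ((1:ℝ)/2) = (2:ℝ)⁻¹ by norm_num, ← Real.rpow_neg_one (2:ℝ),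
          ← Real.rpow_mul (by norm_num)]
        norm_num
        calc (2:ℝ) ^ ((1:ℝ)/2) ≤ (2:ℝ) ^ ((1:ℝ)) :=
              Real.rpow_le_rpow_of_exponent_le (by norm_num) (by norm_num)
          _ = 2 := Real.rpow_one 2
      calc x ^ (-(1/2) : ℝ) * (1-x) ^ (-(1/2) : ℝ)
          ≤ x ^ (-(1/2) : ℝ) * 2 := mul_le_mul_of_nonneg_left (le_trans hb hhalf) hr1
        _ = 2 * x ^ (-(1/2) : ℝ) := by ring
  have p2 : IntervalIntegrable
      (fun k : ℝ => k ^ (-(1/2) : ℝ) * (1-k) ^ (-(1/2) : ℝ)) volume (1/2) 1 := by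
    have hg : IntervalIntegrable (fun k : ℝ => 2 * (1-k) ^ (-(1/2) : ℝ)) volume (1/2) 1 := by
      have h : IntervalIntegrable (fun x : ℝ => x ^ (-(1/2) : ℝ)) volume 0 1 :=
        intervalIntegral.intervalIntegrable_rpow' (by norm_num)
      have h2 := (h.comp_sub_left 1).symm
      norm_num at h2
      exact (h2.mono_set (by
        rw [Set.uIcc_of_le, Set.uIcc_of_le] <;> [skip; norm_num; norm_num]
        exact Set.Icc_subset_Icc (by norm_num) le_rfl)).const_mul 2
    apply intervalIntegrable_of_bound (by norm_num) _ _ hg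
    · apply ContinuousOn.mul
      · exact (contOn_rpow _).mono (fun x hx => lt_trans (by norm_num) hx.1)
      · intro x hx
        exact ((Real.continuousAt_rpow_const (1-x) _
          (Or.inl (by intro h; rw [sub_eq_zero] at h; linarith [hx.2] ))).comp
            (by fun_prop)).continuousWithinAt
    · intro x hx
      have hx0 : (1:ℝ)/2 < x := hx.1
      have hx2 : x < 1 := hx.2
      have hr1 : (0:ℝ) ≤ x ^ (-(1/2) : ℝ) := Real.rpow_nonneg (by linarith) _
      have hr2 : (0:ℝ) ≤ (1-x) ^ (-(1/2) : ℝ) := Real.rpow_nonneg (by linarith) _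
      rw [Real.norm_of_nonneg (mul_nonneg hr1 hr2), Real.norm_of_nonneg (by positivity)]
      have hb : x ^ (-(1/2) : ℝ) ≤ ((1:ℝ)/2) ^ (-(1/2) : ℝ) :=
        Real.rpow_le_rpow_of_nonpos (by norm_num) (by linarith) (by norm_num)
      have hhalf : ((1:ℝ)/2) ^ (-(1/2) : ℝ) ≤ 2 := by
        rw [show ((1:ℝ)/2) = (2:ℝ)⁻¹ by norm_num, ← Real.rpow_neg_one (2:ℝ),
          ← Real.rpow_mul (by norm_num)]
        norm_num
        calc (2:ℝ) ^ ((1:ℝ)/2) ≤ (2:ℝ) ^ ((1:ℝ)) :=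
              Real.rpow_le_rpow_of_exponent_le (by norm_num) (by norm_num)
          _ = 2 := Real.rpow_one 2
      calc x ^ (-(1/2) : ℝ) * (1-x) ^ (-(1/2) : ℝ)
          ≤ ((1:ℝ)/2) ^ (-(1/2) : ℝ) * (1-x) ^ (-(1/2) : ℝ) := mul_le_mul_of_nonneg_right hb hr2
        _ ≤ 2 * (1-x) ^ (-(1/2) : ℝ) := mul_le_mul_of_nonneg_right hhalf hr2
  exact p1.trans p2

lemma rpow_neg_half_eq {x : ℝ} (hx : 0 ≤ x) : x ^ (-(1/2) : ℝ) = 1 / Real.sqrt x := by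
  rw [Real.rpow_neg hx, Real.sqrt_eq_rpow]
  norm_num

lemma weight_le {k : ℝ} (hk : k ∈ Ioo (0:ℝ) 1) :
    k / Real.sqrt (1 - k^2) ≤ (1-k) ^ (-(1/2) : ℝ) := by
  obtain ⟨hk0, hk1⟩ := hk
  have h1 : (0:ℝ) < 1 - k := by linarith
  have h2 : Real.sqrt (1-k) ≤ Real.sqrt (1 - k^2) := Real.sqrt_le_sqrt (by nlinarith)
  have h3 : (0:ℝ) < Real.sqrt (1-k) := Real.sqrt_pos.2 h1
  rw [rpow_neg_half_eq h1.le]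
  have h4 : (0:ℝ) < Real.sqrt (1 - k^2) := lt_of_lt_of_le h3 h2
  calc k / Real.sqrt (1 - k^2) ≤ 1 / Real.sqrt (1 - k^2) := by gcongr
    _ ≤ 1 / Real.sqrt (1-k) := by gcongr

lemma sqrt_one_sub_sq_pos {k : ℝ} (hk : k ∈ Ioo (0:ℝ) 1) : 0 < Real.sqrt (1 - k^2) :=
  Real.sqrt_pos.2 (by nlinarith [hk.1, hk.2])

lemma weight_continuousOn : ContinuousOn (fun k : ℝ => k / Real.sqrt (1 - k^2)) (Ioo 0 1) := by
  apply ContinuousOn.div continuousOn_id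
  · fun_prop
  · intro x hx
    exact (sqrt_one_sub_sq_pos hx).ne'

lemma II_weight_cube : IntervalIntegrable
    (fun k => k / Real.sqrt (1 - k^2) * (EllK' k)^3) volume 0 1 := by
  have hg : IntervalIntegrable
      (fun k : ℝ => 432 * (k ^ (-(1/2) : ℝ) * (1-k) ^ (-(1/2) : ℝ))) volume 0 1 :=
    II_beta.const_mul 432
  apply intervalIntegrable_of_bound (by norm_num) _ _ hg
    (weight_continuousOn.mul (EllK'_continuousOn.pow 3))
  intro x hx
  obtain ⟨hx0, hx1⟩ := hx
  have hw0 : (0:ℝ) ≤ x / Real.sqrt (1 - x^2) :=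
    div_nonneg hx0.le (Real.sqrt_nonneg _)
  have hc0 : (0:ℝ) ≤ (EllK' x)^3 := pow_nonneg (EllK_nonneg _) 3
  have hr1 : (0:ℝ) ≤ x ^ (-(1/2) : ℝ) := Real.rpow_nonneg hx0.le _
  have hr2 : (0:ℝ) ≤ (1-x) ^ (-(1/2) : ℝ) := Real.rpow_nonneg (by linarith) _
  simp only [Pi.mul_apply, Pi.pow_apply]
  rw [Real.norm_of_nonneg (mul_nonneg hw0 hc0), Real.norm_of_nonneg (by positivity)]
  have h1 := weight_le ⟨hx0, hx1⟩
  have h2 := EllK'_cube_le hx0 hx1.le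
  calc x / Real.sqrt (1 - x^2) * (EllK' x)^3
      ≤ (1-x) ^ (-(1/2) : ℝ) * (432 * x ^ (-(1/2) : ℝ)) := by
        apply mul_le_mul h1 h2 hc0 hr2
    _ = 432 * (x ^ (-(1/2) : ℝ) * (1-x) ^ (-(1/2) : ℝ)) := by ring

lemma II_id_cube : IntervalIntegrable (fun k => k * (EllK' k)^3) volume 0 1 := by
  have hg : IntervalIntegrable (fun _ : ℝ => (432:ℝ)) volume 0 1 :=
    intervalIntegrable_const
  apply intervalIntegrable_of_bound (by norm_num) _ _ hg
    ((by fun_prop : ContinuousOn (fun k : ℝ => k) (Ioo 0 1)).mul (EllK'_continuousOn.pow 3))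
  intro x hx
  obtain ⟨hx0, hx1⟩ := hx
  have hc0 : (0:ℝ) ≤ (EllK' x)^3 := pow_nonneg (EllK_nonneg _) 3
  simp only [Pi.mul_apply, Pi.pow_apply]
  rw [Real.norm_of_nonneg (mul_nonneg hx0.le hc0), Real.norm_of_nonneg (by norm_num)]
  have h2 := EllK'_cube_le hx0 hx1.le
  have hx12 : x ^ ((1:ℝ)/2) ≤ 1 := Real.rpow_le_one hx0.le hx1.le (by norm_num)
  have hkey : x * x ^ (-(1/2) : ℝ) = x ^ ((1:ℝ)/2) := by
    rw [show x * x ^ (-(1/2) : ℝ) = x ^ (1:ℝ) * x ^ (-(1/2) : ℝ) by rw [Real.rpow_one],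
      ← Real.rpow_add hx0]
    norm_num
  calc x * (EllK' x)^3 ≤ x * (432 * x ^ (-(1/2) : ℝ)) := by
        apply mul_le_mul_of_nonneg_left h2 hx0.le
    _ = 432 * (x * x ^ (-(1/2) : ℝ)) := by ring
    _ = 432 * x ^ ((1:ℝ)/2) := by rw [hkey]
    _ ≤ 432 := by nlinarith [hx12]

lemma primitive_diff {f : ℝ → ℝ} (hf : IntervalIntegrable f volume 0 1)
    {c d : ℝ} (hc : c ∈ Icc (0:ℝ) 1) (hd : d ∈ Icc (0:ℝ) 1) :
    ∫ x in c..d, f x = (∫ x in (0:ℝ)..d, f x) - ∫ x in (0:ℝ)..c, f x := by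
  have i1 : IntervalIntegrable f volume 0 c := hf.mono_set (by
    rw [Set.uIcc_of_le hc.1, Set.uIcc_of_le (by norm_num : (0:ℝ) ≤ 1)]
    exact Set.Icc_subset_Icc le_rfl hc.2)
  have i2 : IntervalIntegrable f volume c d := hf.mono_set (by
    rw [Set.uIcc_of_le (by norm_num : (0:ℝ) ≤ 1)]
    exact (Set.ordConnected_Icc.uIcc_subset hc hd))
  have := intervalIntegral.integral_add_adjacent_intervals i1 i2
  linarith

lemma sub_lemma {f g φ φ' : ℝ → ℝ}
    (hf_int : IntervalIntegrable f volume 0 1)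
    (hg_int : IntervalIntegrable g volume 0 1)
    (hφ_cont : ContinuousOn φ (Icc 0 1))
    (hmaps : MapsTo φ (Icc 0 1) (Icc 0 1))
    (hmapsO : MapsTo φ (Ioo 0 1) (Ioo 0 1))
    (hderiv : ∀ x ∈ Ioo (0:ℝ) 1, HasDerivAt φ (φ' x) x)
    (hφ'c : ContinuousOn φ' (Ioo 0 1))
    (hf_cont : ContinuousOn f (Ioo 0 1))
    (heq : ∀ x ∈ Ioo (0:ℝ) 1, φ' x * f (φ x) = g x) :
    ∫ x in (φ 0)..(φ 1), f x = ∫ x in (0:ℝ)..1, g x := by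
  set Pf : ℝ → ℝ := fun y => ∫ t in (0:ℝ)..y, f t with hPfdef
  set Pg : ℝ → ℝ := fun y => ∫ t in (0:ℝ)..y, g t with hPgdef
  have hIccf : IntegrableOn f (uIcc 0 1) volume := by
    rw [Set.uIcc_of_le (by norm_num : (0:ℝ) ≤ 1)]
    exact hf_int.1.congr_set_ae Ioc_ae_eq_Icc.symm
  have hIccg : IntegrableOn g (uIcc 0 1) volume := by
    rw [Set.uIcc_of_le (by norm_num : (0:ℝ) ≤ 1)]
    exact hg_int.1.congr_set_ae Ioc_ae_eq_Icc.symm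
  have hPf : ContinuousOn Pf (Icc 0 1) := by
    have := intervalIntegral.continuousOn_primitive_interval (a := 0) (b := 1) hIccf
    rwa [Set.uIcc_of_le (by norm_num : (0:ℝ) ≤ 1)] at this
  have hPg : ContinuousOn Pg (Icc 0 1) := by
    have := intervalIntegral.continuousOn_primitive_interval (a := 0) (b := 1) hIccg
    rwa [Set.uIcc_of_le (by norm_num : (0:ℝ) ≤ 1)] at this
  -- core identity on interior
  have hstep : ∀ a ∈ Ioo (0:ℝ) 1, ∀ b ∈ Ioo (0:ℝ) 1,
      Pf (φ b) - Pf (φ a) = Pg b - Pg a := by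
    intro a ha b hb
    have hsub : uIcc a b ⊆ Ioo (0:ℝ) 1 := Set.ordConnected_Ioo.uIcc_subset ha hb
    have himg : φ '' (uIcc a b) ⊆ Ioo (0:ℝ) 1 :=
      subset_trans (Set.image_mono hsub) (hmapsO.image_subset)
    have h1 : ∫ x in a..b, φ' x • (f ∘ φ) x = ∫ u in (φ a)..(φ b), f u := by
      apply intervalIntegral.integral_comp_smul_deriv''
      · exact hφ_cont.mono (subset_trans hsub Set.Ioo_subset_Icc_self)
      · intro x hx
        have hx' : x ∈ uIcc a b := by
          rw [Set.uIcc]; exact Set.Ioo_subset_Icc_self hx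
        exact (hderiv x (hsub hx')).hasDerivWithinAt
      · exact hφ'c.mono hsub
      · exact hf_cont.mono himg
    have h2 : ∫ x in a..b, g x = ∫ x in a..b, φ' x • (f ∘ φ) x := by
      apply intervalIntegral.integral_congr
      intro x hx
      have := heq x (hsub hx)
      simp only [Function.comp_apply, smul_eq_mul]
      linarith [this]
    have h3 : ∫ u in (φ a)..(φ b), f u = Pf (φ b) - Pf (φ a) :=
      primitive_diff hf_int
        (Set.Ioo_subset_Icc_self (hmapsO ha)) (Set.Ioo_subset_Icc_self (hmapsO hb))
    have h4 : ∫ x in a..b, g x = Pg b - Pg a :=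
      primitive_diff hg_int (Set.Ioo_subset_Icc_self ha) (Set.Ioo_subset_Icc_self hb)
    rw [← h3, ← h1, ← h2, h4]
  -- limits
  have hclosure : ∀ y ∈ Icc (0:ℝ) 1, (𝓝[Ioo (0:ℝ) 1] y).NeBot := by
    intro y hy
    rw [← mem_closure_iff_nhdsWithin_neBot, closure_Ioo (by norm_num : (0:ℝ) ≠ 1)]
    exact hy
  have tend : ∀ y ∈ Icc (0:ℝ) 1,
      Tendsto (fun b => Pf (φ b)) (𝓝[Ioo (0:ℝ) 1] y) (𝓝 (Pf (φ y))) ∧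
      Tendsto Pg (𝓝[Ioo (0:ℝ) 1] y) (𝓝 (Pg y)) := by
    intro y hy
    constructor
    · have tφ : Tendsto φ (𝓝[Ioo (0:ℝ) 1] y) (𝓝 (φ y)) :=
        (hφ_cont.continuousWithinAt hy).mono_left (nhdsWithin_mono _ Set.Ioo_subset_Icc_self)
      have tφ' : Tendsto φ (𝓝[Ioo (0:ℝ) 1] y) (𝓝[Icc (0:ℝ) 1] (φ y)) := by
        apply tendsto_nhdsWithin_of_tendsto_nhds_of_eventually_within _ tφ
        filter_upwards [self_mem_nhdsWithin] with x hx
        exact Set.Ioo_subset_Icc_self (hmapsO hx)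
      exact (hPf.continuousWithinAt (hmaps hy)).tendsto.comp tφ'
    · exact (hPg.continuousWithinAt hy).mono_left (nhdsWithin_mono _ Set.Ioo_subset_Icc_self)
  -- first take b → 1 for fixed a
  have step1 : ∀ a ∈ Ioo (0:ℝ) 1, Pf (φ 1) - Pf (φ a) = Pg 1 - Pg a := by
    intro a ha
    have hne := hclosure 1 (by norm_num)
    obtain ⟨t1, t2⟩ := tend 1 (by norm_num)
    have e1 : Tendsto (fun b => Pf (φ b) - Pf (φ a)) (𝓝[Ioo (0:ℝ) 1] 1)
        (𝓝 (Pf (φ 1) - Pf (φ a))) := t1.sub tendsto_const_nhds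
    have e2 : Tendsto (fun b => Pg b - Pg a) (𝓝[Ioo (0:ℝ) 1] 1)
        (𝓝 (Pg 1 - Pg a)) := t2.sub tendsto_const_nhds
    have heqf : (fun b => Pf (φ b) - Pf (φ a)) =ᶠ[𝓝[Ioo (0:ℝ) 1] 1]
        (fun b => Pg b - Pg a) := by
      filter_upwards [self_mem_nhdsWithin] with b hb
      exact hstep a ha b hb
    exact tendsto_nhds_unique (e1.congr' heqf) e2
  -- then a → 0
  have hne0 := hclosure 0 (by norm_num)
  obtain ⟨t1, t2⟩ := tend 0 (by norm_num)
  have e1 : Tendsto (fun a => Pf (φ 1) - Pf (φ a)) (𝓝[Ioo (0:ℝ) 1] 0)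
      (𝓝 (Pf (φ 1) - Pf (φ 0))) := tendsto_const_nhds.sub t1
  have e2 : Tendsto (fun a => Pg 1 - Pg a) (𝓝[Ioo (0:ℝ) 1] 0)
      (𝓝 (Pg 1 - Pg 0)) := tendsto_const_nhds.sub t2
  have heqf : (fun a => Pf (φ 1) - Pf (φ a)) =ᶠ[𝓝[Ioo (0:ℝ) 1] 0]
      (fun a => Pg 1 - Pg a) := by
    filter_upwards [self_mem_nhdsWithin] with a ha
    exact step1 a ha
  have hfin : Pf (φ 1) - Pf (φ 0) = Pg 1 - Pg 0 :=
    tendsto_nhds_unique (e1.congr' heqf) e2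
  have hL : ∫ x in (φ 0)..(φ 1), f x = Pf (φ 1) - Pf (φ 0) :=
    primitive_diff hf_int (hmaps (by norm_num : (0:ℝ) ∈ Icc (0:ℝ) 1))
      (hmaps (by norm_num : (1:ℝ) ∈ Icc (0:ℝ) 1))
  have hR : Pg 1 - Pg 0 = ∫ x in (0:ℝ)..1, g x := by
    have : Pg 0 = 0 := intervalIntegral.integral_same
    rw [this]; simp [hPgdef]
  rw [hL, hfin, hR]


lemma F_continuousOn {κ : ℝ} (hκ0 : 0 ≤ κ) (hκ1 : κ < 1) :
    ContinuousOn (F κ) (Ioo 0 1) := by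
  intro u hu
  obtain ⟨hu0, hu1⟩ := hu
  have hpos : (0:ℝ) < (1 - u^2) * (1 - κ^2 * u^2) := by
    have hku : κ * u < 1 := by nlinarith
    have h2 : κ^2 * u^2 < 1 := by nlinarith [mul_nonneg hκ0 hu0.le, sq_nonneg (κ*u)]
    have h3 : (0:ℝ) < 1 - u^2 := by nlinarith
    have h4 : (0:ℝ) < 1 - κ^2*u^2 := by nlinarith
    positivity
  apply ContinuousWithinAt.div continuousWithinAt_const
  · have h : Continuous fun u : ℝ => Real.sqrt ((1 - u^2) * (1 - κ^2 * u^2)) := by fun_prop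
    exact h.continuousWithinAt
  · exact (Real.sqrt_pos.2 hpos).ne'

lemma landen {s : ℝ} (hs0 : 0 < s) (hs1 : s < 1) :
    EllK (2*Real.sqrt s/(1+s)) = (1+s) * EllK s := by
  set t : ℝ := Real.sqrt s with htdef
  have ht0 : 0 < t := Real.sqrt_pos.2 hs0
  have ht1 : t < 1 := (Real.sqrt_lt' one_pos).2 (by nlinarith)
  have hts : t^2 = s := Real.sq_sqrt hs0.le
  set m : ℝ := 2*t/(1+s) with hmdef
  have hm0 : 0 < m := by positivity
  have hm1 : m < 1 := by
    rw [hmdef, div_lt_one (by linarith)]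
    nlinarith [sq_nonneg (1-t)]
  have hm2 : m^2 = 4*s/(1+s)^2 := by
    rw [hmdef, div_pow]
    congr 1
    nlinarith [hts]
  set ψ : ℝ → ℝ := fun v => (1+s)*v/(1+s*v^2) with hψdef
  set ψ' : ℝ → ℝ := fun v => (1+s)*(1-s*v^2)/(1+s*v^2)^2 with hψ'def
  have hD : ∀ v : ℝ, (0:ℝ) < 1 + s*v^2 := fun v => by positivity
  have hψ0 : ψ 0 = 0 := by simp [hψdef]
  have hψ1 : ψ 1 = 1 := by
    rw [hψdef]
    norm_num
    exact (by linarith : (0:ℝ) < 1+s).ne'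
  have hψcont : Continuous ψ := by
    apply Continuous.div (by fun_prop) (by fun_prop)
    intro v; exact (hD v).ne'
  have hderiv : ∀ x ∈ Ioo (0:ℝ) 1, HasDerivAt ψ (ψ' x) x := by
    intro x _
    have h1 : HasDerivAt (fun v : ℝ => (1+s)*v) (1+s) x := by
      simpa using (hasDerivAt_id x).const_mul (1+s)
    have h2 : HasDerivAt (fun v : ℝ => 1 + s*v^2) (s*(2*x)) x := by
      have := ((hasDerivAt_pow 2 x).const_mul s).const_add 1
      simpa using this
    have h3 := h1.div h2 (hD x).ne'
    refine h3.congr_deriv ?_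
    rw [hψ'def]
    field_simp
    ring
  have hψ'cont : Continuous ψ' := by
    apply Continuous.div (by fun_prop) (by fun_prop)
    intro v; exact (pow_ne_zero 2 (hD v).ne')
  have hmaps : MapsTo ψ (Icc 0 1) (Icc 0 1) := by
    intro v hv
    obtain ⟨hv0, hv1⟩ := hv
    constructor
    · rw [hψdef]; positivity
    · rw [hψdef, div_le_one (hD v)]
      nlinarith [mul_nonneg (sub_nonneg.2 hv1) (sub_nonneg.2 (show s*v ≤ 1 by nlinarith))]
  have hmapsO : MapsTo ψ (Ioo 0 1) (Ioo 0 1) := by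
    intro v hv
    obtain ⟨hv0, hv1⟩ := hv
    constructor
    · rw [hψdef]; positivity
    · rw [hψdef, div_lt_one (hD v)]
      nlinarith [mul_pos (sub_pos.2 hv1) (sub_pos.2 (show s*v < 1 by nlinarith))]
  have heq : ∀ v ∈ Ioo (0:ℝ) 1, ψ' v * F m (ψ v) = (1+s) * F s v := by
    intro v hv
    obtain ⟨hv0, hv1⟩ := hv
    have hDv := hD v
    have hsv : s*v^2 < 1 := by nlinarith
    have hXv : (0:ℝ) < (1-v^2)*(1-s^2*v^2) := by
      have h1 : (0:ℝ) < 1 - v^2 := by nlinarith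
      have h2 : s*v < 1 := by nlinarith
      have h3 : (0:ℝ) < 1 - s^2*v^2 := by nlinarith [mul_nonneg hs0.le hv0.le, sq_nonneg (s*v)]
      positivity
    have e1 : 1 - (ψ v)^2 = (1-v^2)*(1-s^2*v^2)/(1+s*v^2)^2 := by
      rw [hψdef]
      field_simp
      ring
    have e2 : 1 - m^2*(ψ v)^2 = (1-s*v^2)^2/(1+s*v^2)^2 := by
      rw [hψdef, hm2]
      field_simp
      ring
    set c : ℝ := (1-s*v^2)/(1+s*v^2)^2 with hcdef
    have hc0 : (0:ℝ) < c := div_pos (by linarith) (pow_pos hDv 2)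
    have hP : (1 - (ψ v)^2) * (1 - m^2*(ψ v)^2)
        = ((1-v^2)*(1-s^2*v^2)) * c^2 := by
      rw [e1, e2, hcdef, div_pow]
      rw [div_mul_div_comm]
      congr 1
      ring
    have hsqrt : Real.sqrt ((1 - (ψ v)^2) * (1 - m^2*(ψ v)^2))
        = Real.sqrt ((1-v^2)*(1-s^2*v^2)) * c := by
      rw [hP, Real.sqrt_mul hXv.le, Real.sqrt_sq hc0.le]
    have hsX : (0:ℝ) < Real.sqrt ((1-v^2)*(1-s^2*v^2)) := Real.sqrt_pos.2 hXv
    have hψ'v : ψ' v = (1+s) * c := by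
      rw [hψ'def, hcdef]
      ring
    unfold F
    rw [hsqrt, hψ'v]
    rw [one_div, mul_inv, one_div]
    field_simp
  have hfint := intervalIntegrable_F hm0.le hm1
  have hgint := (intervalIntegrable_F hs0.le hs1).const_mul (1+s)
  have hsub := sub_lemma hfint hgint hψcont.continuousOn hmaps hmapsO hderiv
    hψ'cont.continuousOn (F_continuousOn hm0.le hm1) heq
  rw [hψ0, hψ1] at hsub
  rw [EllK_eq, EllK_eq, hsub, intervalIntegral.integral_const_mul]

lemma kp_mem {k : ℝ} (hk : k ∈ Ioo (0:ℝ) 1) : Real.sqrt (1-k^2) ∈ Ioo (0:ℝ) 1 :=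
  ⟨Real.sqrt_pos.2 (by nlinarith [hk.1, hk.2]), sqrt_one_sub_sq_lt_one hk.1 hk.2.le⟩

lemma hasDerivAt_kp {k : ℝ} (hk : k ∈ Ioo (0:ℝ) 1) :
    HasDerivAt (fun x : ℝ => Real.sqrt (1-x^2)) (-k / Real.sqrt (1-k^2)) k := by
  have h1 : (0:ℝ) < 1 - k^2 := by nlinarith [hk.1, hk.2]
  have d0 : HasDerivAt (fun x : ℝ => 1 - x^2) (-(2*k)) k := by
    simpa [Pi.sub_def] using (hasDerivAt_const k (1:ℝ)).sub (hasDerivAt_pow 2 k)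
  have d1 := (Real.hasDerivAt_sqrt h1.ne').comp k d0
  simp only [Function.comp_def] at d1
  have hs : (0:ℝ) < Real.sqrt (1-k^2) := Real.sqrt_pos.2 h1
  have he : 1 / (2 * Real.sqrt (1-k^2)) * -(2*k) = -k / Real.sqrt (1-k^2) := by
    field_simp
  rwa [he] at d1

/-- the key Landen consequence for EllK' -/
lemma star {k : ℝ} (hk : k ∈ Ioo (0:ℝ) 1) :
    EllK' ((1 - Real.sqrt (1-k^2))/(1 + Real.sqrt (1-k^2)))
      = (1 + Real.sqrt (1-k^2)) * EllK' k := by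
  set κ : ℝ := Real.sqrt (1-k^2) with hκdef
  obtain ⟨hκ0, hκ1⟩ := kp_mem hk
  have hκD : (0:ℝ) < 1 + κ := by linarith
  have harg : Real.sqrt (1 - ((1 - κ)/(1 + κ))^2) = 2*Real.sqrt κ/(1+κ) := by
    have h1 : 1 - ((1 - κ)/(1 + κ))^2 = (2*Real.sqrt κ/(1+κ))^2 := by
      have h2 : (2*Real.sqrt κ)^2 = 4*κ := by
        rw [mul_pow, Real.sq_sqrt hκ0.le]; norm_num [hκdef]
      rw [div_pow, div_pow, h2]
      field_simp
      ring
    rw [h1, Real.sqrt_sq (by positivity)]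
  have hland := landen hκ0 hκ1
  show EllK (Real.sqrt (1 - ((1 - κ)/(1 + κ))^2)) = (1 + κ) * EllK' k
  rw [harg, hland]
  rfl

noncomputable def φL : ℝ → ℝ :=
  fun k => (1 - Real.sqrt (1-k^2))/(1 + Real.sqrt (1-k^2))

noncomputable def φL' : ℝ → ℝ :=
  fun k => 2*k / (Real.sqrt (1-k^2) * (1 + Real.sqrt (1-k^2))^2)

lemma φL_zero : φL 0 = 0 := by
  unfold φL; norm_num

lemma φL_one : φL 1 = 1 := by
  unfold φL; norm_num

lemma sqrt_one_sub_sq_cont : Continuous (fun k : ℝ => Real.sqrt (1-k^2)) := by fun_prop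

lemma φL_cont : Continuous φL := by
  unfold φL
  apply Continuous.div (by fun_prop) (by fun_prop)
  intro k
  have := Real.sqrt_nonneg (1-k^2)
  intro h; linarith [h]

lemma φL_maps : MapsTo φL (Icc 0 1) (Icc 0 1) := by
  intro k hk
  have h0 : (0:ℝ) ≤ Real.sqrt (1-k^2) := Real.sqrt_nonneg _
  have h1 : Real.sqrt (1-k^2) ≤ 1 := Real.sqrt_le_one.2 (by nlinarith [hk.1])
  constructor
  · unfold φL
    apply div_nonneg (by linarith) (by linarith)
  · unfold φL
    rw [div_le_one (by linarith)]
    linarith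

lemma φL_mapsO : MapsTo φL (Ioo 0 1) (Ioo 0 1) := by
  intro k hk
  obtain ⟨h0, h1⟩ := kp_mem hk
  constructor
  · unfold φL
    apply div_pos (by linarith) (by linarith)
  · unfold φL
    rw [div_lt_one (by linarith)]
    linarith

lemma φL_deriv : ∀ k ∈ Ioo (0:ℝ) 1, HasDerivAt φL (φL' k) k := by
  intro k hk
  obtain ⟨hκ0, hκ1⟩ := kp_mem hk
  have hd := hasDerivAt_kp hk
  have d1 : HasDerivAt (fun x : ℝ => 1 - Real.sqrt (1-x^2)) (-(-k / Real.sqrt (1-k^2))) k := by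
    simpa [Pi.sub_def] using (hasDerivAt_const k (1:ℝ)).sub hd
  have d2 : HasDerivAt (fun x : ℝ => 1 + Real.sqrt (1-x^2)) (-k / Real.sqrt (1-k^2)) k := by
    simpa [Pi.add_def] using (hasDerivAt_const k (1:ℝ)).add hd
  have hne : (1 + Real.sqrt (1-k^2)) ≠ 0 := by linarith
  have d3 := d1.div d2 hne
  have he : (-(-k / Real.sqrt (1-k^2)) * (1 + Real.sqrt (1-k^2)) -
      (1 - Real.sqrt (1-k^2)) * (-k / Real.sqrt (1-k^2))) / (1 + Real.sqrt (1-k^2))^2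
      = φL' k := by
    unfold φL'
    field_simp
    ring
  rw [he] at d3
  exact d3
  
lemma φL'_cont : ContinuousOn φL' (Ioo 0 1) := by
  unfold φL'
  apply ContinuousOn.div (by fun_prop)
  · fun_prop
  · intro k hk
    obtain ⟨hκ0, hκ1⟩ := kp_mem hk
    positivity

lemma heq_B : ∀ k ∈ Ioo (0:ℝ) 1,
    φL' k * (EllK' (φL k))^3
      = 2*(k / Real.sqrt (1-k^2) * (EllK' k)^3) + 2*(k*(EllK' k)^3) := by
  intro k hk
  obtain ⟨hκ0, hκ1⟩ := kp_mem hk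
  have hs := star hk
  unfold φL φL'
  rw [hs, mul_pow]
  set κ := Real.sqrt (1-k^2)
  have : 2*k / (κ * (1 + κ)^2) * ((1+κ)^3 * (EllK' k)^3)
      = (2*(k/κ)*(1+κ)) * (EllK' k)^3 := by
    field_simp
  rw [this]
  field_simp

lemma heq_D : ∀ k ∈ Ioo (0:ℝ) 1,
    φL' k * (φL k * (EllK' (φL k))^3)
      = 2*(k / Real.sqrt (1-k^2) * (EllK' k)^3) - 2*(k*(EllK' k)^3) := by
  intro k hk
  obtain ⟨hκ0, hκ1⟩ := kp_mem hk
  have hs := star hk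
  unfold φL φL'
  rw [hs, mul_pow]
  set κ := Real.sqrt (1-k^2)
  have h1 : (0:ℝ) < 1 + κ := by linarith
  field_simp

/-- J = A : substitution s = sqrt(1-k^2) -/
lemma J_eq_A :
    (∫ k in (0:ℝ)..1, (EllK k)^3)
      = ∫ k in (0:ℝ)..1, k / Real.sqrt (1-k^2) * (EllK' k)^3 := by
  have h := sub_lemma (f := fun x => (EllK x)^3)
    (g := fun k => -(k / Real.sqrt (1-k^2) * (EllK' k)^3))
    (φ := fun x => Real.sqrt (1-x^2))
    (φ' := fun k => -k / Real.sqrt (1-k^2))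
    II_EllK_cube II_weight_cube.neg (sqrt_one_sub_sq_cont.continuousOn) ?_
    (fun k hk => kp_mem hk)
    (fun k hk => hasDerivAt_kp hk) ?_ (EllK_continuousOn.pow 3) ?_
  · simp only [show ((1:ℝ) - 0^2) = 1 by norm_num, show ((1:ℝ)-1^2) = 0 by norm_num,
      Real.sqrt_one, Real.sqrt_zero] at h
    rw [intervalIntegral.integral_symm, intervalIntegral.integral_neg] at h
    linarith [h]
  · -- maps Icc to Icc
    intro k hk
    constructor
    · exact Real.sqrt_nonneg _
    · show Real.sqrt (1-k^2) ≤ 1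
      exact Real.sqrt_le_one.2 (by nlinarith [hk.1])
  · -- φ' continuity
    apply ContinuousOn.div (by fun_prop) (by fun_prop)
    intro k hk
    exact (kp_mem hk).1.ne'
  · -- heq
    intro x hx
    show (-x / Real.sqrt (1-x^2)) * (EllK (Real.sqrt (1-x^2)))^3
      = -(x / Real.sqrt (1-x^2) * (EllK' x)^3)
    unfold EllK'
    ring

lemma B_rel : (∫ k in (0:ℝ)..1, (EllK' k)^3)
    = 2*(∫ k in (0:ℝ)..1, k / Real.sqrt (1-k^2) * (EllK' k)^3)
      + 2*(∫ k in (0:ℝ)..1, k*(EllK' k)^3) := by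
  have h := sub_lemma (f := fun t => (EllK' t)^3)
    (g := fun k => 2*(k / Real.sqrt (1-k^2) * (EllK' k)^3) + 2*(k*(EllK' k)^3))
    (φ := φL) (φ' := φL')
    II_EllK'_cube ((II_weight_cube.const_mul 2).add (II_id_cube.const_mul 2))
    φL_cont.continuousOn φL_maps φL_mapsO φL_deriv φL'_cont
    (EllK'_continuousOn.pow 3) heq_B
  rw [φL_zero, φL_one] at h
  have hsplit : (∫ k in (0:ℝ)..1,
      (2*(k / Real.sqrt (1-k^2) * (EllK' k)^3) + 2*(k*(EllK' k)^3)))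
      = 2*(∫ k in (0:ℝ)..1, k / Real.sqrt (1-k^2) * (EllK' k)^3)
        + 2*(∫ k in (0:ℝ)..1, k*(EllK' k)^3) := by
    rw [intervalIntegral.integral_add (II_weight_cube.const_mul 2) (II_id_cube.const_mul 2),
      intervalIntegral.integral_const_mul, intervalIntegral.integral_const_mul]
  linarith [h, hsplit]

lemma D_rel : (∫ k in (0:ℝ)..1, k*(EllK' k)^3)
    = 2*(∫ k in (0:ℝ)..1, k / Real.sqrt (1-k^2) * (EllK' k)^3)
      - 2*(∫ k in (0:ℝ)..1, k*(EllK' k)^3) := by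
  have h := sub_lemma (f := fun t => t*(EllK' t)^3)
    (g := fun k => 2*(k / Real.sqrt (1-k^2) * (EllK' k)^3) - 2*(k*(EllK' k)^3))
    (φ := φL) (φ' := φL')
    II_id_cube ((II_weight_cube.const_mul 2).sub (II_id_cube.const_mul 2))
    φL_cont.continuousOn φL_maps φL_mapsO φL_deriv φL'_cont
    ((by fun_prop : ContinuousOn (fun t:ℝ => t) (Ioo 0 1)).mul (EllK'_continuousOn.pow 3))
    heq_D
  rw [φL_zero, φL_one] at h
  have hsplit : (∫ k in (0:ℝ)..1,
      (2*(k / Real.sqrt (1-k^2) * (EllK' k)^3) - 2*(k*(EllK' k)^3)))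
      = 2*(∫ k in (0:ℝ)..1, k / Real.sqrt (1-k^2) * (EllK' k)^3)
        - 2*(∫ k in (0:ℝ)..1, k*(EllK' k)^3) := by
    rw [intervalIntegral.integral_sub (II_weight_cube.const_mul 2) (II_id_cube.const_mul 2),
      intervalIntegral.integral_const_mul, intervalIntegral.integral_const_mul]
  linarith [h, hsplit]

theorem final :
    ∫ k in (0:ℝ)..1, (EllK' k)^3 = (10/3) * ∫ k in (0:ℝ)..1, (EllK k)^3 := by
  have hJ := J_eq_A
  have hB := B_rel
  have hD := D_rel
  linarith


end Wan

theorem stmt1 :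
    ∫ k in (0:ℝ)..1, (EllK' k)^3 = (10/3) * ∫ k in (0:ℝ)..1, (EllK k)^3 := Wan.final
end

section
/- ∫₀¹ K'(k)³ dk = 5·∫₀¹ k·K'(k)³ dk, where K' is the complementary complete elliptic integral of the first kind. -/
open MeasureTheory Set Real

lemma ellK_as_set (k : ℝ) :
    EllK k = ∫ u in Ioo (0:ℝ) 1, 1 / Real.sqrt ((1 - u^2) * (1 - k^2 * u^2)) := by
  rw [EllK, intervalIntegral.integral_of_le (by norm_num), integral_Ioc_eq_integral_Ioo]

lemma sqrt_int (a : ℝ) : IntegrableOn (fun u : ℝ => 1 / Real.sqrt (1 - u)) (Ioo a 1) := by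
  have h1 : IntervalIntegrable (fun u : ℝ => u ^ (-(1/2) : ℝ)) volume 0 (1 - a) :=
    intervalIntegral.intervalIntegrable_rpow' (by norm_num)
  have h2 : IntervalIntegrable (fun u : ℝ => (1 - u) ^ (-(1/2) : ℝ)) volume a 1 := by
    simpa using (h1.comp_sub_left 1).symm
  have h3 : IntegrableOn (fun u : ℝ => (1 - u) ^ (-(1/2) : ℝ)) (Ioo a 1) := by
    rcases le_or_gt a 1 with h | h
    · exact ((intervalIntegrable_iff_integrableOn_Ioo_of_le h).mp h2)
    · simp [Ioo_eq_empty_of_le h.le]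
  refine h3.congr_fun (fun u hu => ?_) measurableSet_Ioo
  beta_reduce
  rw [Real.rpow_neg (by linarith [hu.2] : (0:ℝ) ≤ 1 - u), Real.sqrt_eq_rpow]
  norm_num


lemma inner_pos {x u : ℝ} (hx0 : 0 ≤ x) (hx1 : x < 1) (hu : u ∈ Ioo (0:ℝ) 1) :
    0 < (1 - u^2) * (1 - x^2 * u^2) := by
  obtain ⟨hu0, hu1⟩ := hu
  have h1 : u^2 < 1 := by nlinarith
  have h2 : x^2 * u^2 < 1 := by nlinarith
  nlinarith

lemma inner_contOn {x : ℝ} (hx0 : 0 ≤ x) (hx1 : x < 1) :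
    ContinuousOn (fun u : ℝ => 1 / Real.sqrt ((1 - u^2) * (1 - x^2 * u^2))) (Ioo 0 1) := by
  apply ContinuousOn.div continuousOn_const
  · exact (Real.continuous_sqrt.comp (by continuity)).continuousOn
  · intro u hu
    exact (Real.sqrt_pos.mpr (inner_pos hx0 hx1 hu)).ne'

lemma inner_le {x u : ℝ} (hx0 : 0 ≤ x) (hx1 : x < 1) (hu : u ∈ Ioo (0:ℝ) 1) :
    1 / Real.sqrt ((1 - u^2) * (1 - x^2 * u^2)) ≤ (1 - x)⁻¹ * (1 / Real.sqrt (1 - u)) := by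
  obtain ⟨hu0, hu1⟩ := hu
  have key : (1 - x) * (1 - u) ≤ (1 - u^2) * (1 - x^2 * u^2) := by
    have e : (1 - u^2) * (1 - x^2*u^2) = ((1-u)*(1-x*u))*((1+u)*(1+x*u)) := by ring
    have e1 : (1 - x) * (1 - u) ≤ (1-u)*(1-x*u) := by
      nlinarith [mul_nonneg hx0 (sq_nonneg (1-u))]
    have e2 : (1:ℝ) ≤ (1+u)*(1+x*u) := by nlinarith
    have e3 : (0:ℝ) ≤ (1-u)*(1-x*u) := by nlinarith
    nlinarith
  have h1 : (0:ℝ) < (1 - x) * (1 - u) := by nlinarith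
  have h2 : Real.sqrt ((1-x)*(1-u)) ≤ Real.sqrt ((1 - u^2) * (1 - x^2 * u^2)) :=
    Real.sqrt_le_sqrt key
  have h3 : 0 < Real.sqrt ((1-x)*(1-u)) := Real.sqrt_pos.mpr h1
  have h4 : 1 / Real.sqrt ((1 - u^2) * (1 - x^2 * u^2)) ≤ 1 / Real.sqrt ((1-x)*(1-u)) :=
    one_div_le_one_div_of_le h3 h2
  refine h4.trans ?_
  have h5 : 1 - x ≤ Real.sqrt (1-x) := by
    nlinarith [Real.sq_sqrt (show (0:ℝ) ≤ 1-x by linarith), Real.sqrt_nonneg (1-x)]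
  have h6 : 0 < Real.sqrt (1-u) := Real.sqrt_pos.mpr (by linarith)
  rw [Real.sqrt_mul (by linarith) (1-u), one_div, mul_inv, one_div]
  exact mul_le_mul_of_nonneg_right (inv_anti₀ (by linarith) h5) (by positivity)

lemma inner_integrable {x : ℝ} (hx0 : 0 ≤ x) (hx1 : x < 1) :
    IntegrableOn (fun u : ℝ => 1 / Real.sqrt ((1 - u^2) * (1 - x^2 * u^2))) (Ioo 0 1) := by
  apply Integrable.mono' (((sqrt_int 0).const_mul ((1-x)⁻¹)))
    ((inner_contOn hx0 hx1).aestronglyMeasurable measurableSet_Ioo)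
  filter_upwards [ae_restrict_mem measurableSet_Ioo] with u hu
  rw [Real.norm_eq_abs, abs_of_nonneg (by positivity)]
  exact inner_le hx0 hx1 hu

lemma EllK_nonneg (x : ℝ) : 0 ≤ EllK x := by
  rw [ellK_as_set]
  exact setIntegral_nonneg measurableSet_Ioo (fun u hu => by positivity)

lemma EllK_mono {x₁ x₂ : ℝ} (h0 : 0 ≤ x₁) (h12 : x₁ ≤ x₂) (h2 : x₂ < 1) :
    EllK x₁ ≤ EllK x₂ := by
  rw [ellK_as_set, ellK_as_set]
  apply setIntegral_mono_on (inner_integrable h0 (lt_of_le_of_lt h12 h2))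
    (inner_integrable (le_trans h0 h12) h2) measurableSet_Ioo
  intro u hu
  obtain ⟨hu0, hu1⟩ := hu
  have hp2 : 0 < (1 - u^2) * (1 - x₂^2 * u^2) := inner_pos (le_trans h0 h12) h2 ⟨hu0, hu1⟩
  have hle : (1 - u^2) * (1 - x₂^2 * u^2) ≤ (1 - u^2) * (1 - x₁^2 * u^2) := by
    have hx : x₁^2 ≤ x₂^2 := by nlinarith
    have hu2 : (0:ℝ) ≤ 1 - u^2 := by nlinarith
    nlinarith [mul_le_mul_of_nonneg_left (mul_le_mul_of_nonneg_right hx (sq_nonneg u)) hu2]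
  exact one_div_le_one_div_of_le (Real.sqrt_pos.mpr hp2) (Real.sqrt_le_sqrt hle)

lemma log_piece {x : ℝ} (hx0 : 0 ≤ x) (hx1 : x < 1) :
    ∫ u in Ioo (0:ℝ) x, (1-u)⁻¹ = -Real.log (1-x) := by
  have hderiv : ∀ u ∈ Set.uIcc (0:ℝ) x, HasDerivAt (fun t => -Real.log (1-t)) (1-u)⁻¹ u := by
    intro u hu
    rw [Set.uIcc_of_le hx0] at hu
    have h1 : (1:ℝ) - u ≠ 0 := by
      have := hu.2; intro h; linarith [lt_of_le_of_lt hu.2 hx1]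
    have := ((Real.hasDerivAt_log h1).comp u (((hasDerivAt_id u).const_sub 1)))
    convert this.neg using 1
    · rfl
    · rfl
    · rfl
    · ring
  have hcont : ContinuousOn (fun u : ℝ => (1-u)⁻¹) (Set.uIcc 0 x) := by
    rw [Set.uIcc_of_le hx0]
    apply ContinuousOn.inv₀ (by fun_prop)
    intro u hu
    have := hu.2; intro h; linarith [lt_of_le_of_lt hu.2 hx1]
  have := intervalIntegral.integral_eq_sub_of_hasDerivAt hderiv
    (hcont.intervalIntegrable)
  rw [intervalIntegral.integral_of_le hx0, integral_Ioc_eq_integral_Ioo] at this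
  rw [this]
  simp

lemma sqrt_piece {x : ℝ} (hx1 : x ≤ 1) :
    ∫ u in Ioo x 1, 1 / Real.sqrt (1-u) = 2 * Real.sqrt (1-x) := by
  have hcont : ContinuousOn (fun u : ℝ => -2 * Real.sqrt (1-u)) (Set.Icc x 1) := by
    fun_prop
  have hderiv : ∀ u ∈ Set.Ioo x 1, HasDerivWithinAt (fun t => -2 * Real.sqrt (1-t))
      (1 / Real.sqrt (1-u)) (Set.Ioi u) u := by
    intro u hu
    have h1 : (1:ℝ) - u ≠ 0 := by have := hu.2; intro h; linarith
    have hs : HasDerivAt (fun t : ℝ => Real.sqrt (1-t)) ((-1) / (2 * Real.sqrt (1-u))) u := by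
      have := (((hasDerivAt_id u).const_sub 1)).sqrt h1
      convert this using 1 <;> rfl
    have := hs.const_mul (-2 : ℝ)
    have h2 : 0 < Real.sqrt (1-u) := Real.sqrt_pos.mpr (by linarith [hu.2])
    have heq : (-2 : ℝ) * ((-1) / (2 * Real.sqrt (1-u))) = 1 / Real.sqrt (1-u) := by
      field_simp
    rw [heq] at this
    exact this.hasDerivWithinAt
  have hint : IntervalIntegrable (fun u : ℝ => 1 / Real.sqrt (1-u)) volume x 1 := by
    rw [intervalIntegrable_iff_integrableOn_Ioo_of_le hx1]
    exact (sqrt_int x).mono_set (by intro u hu; exact hu)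
  have := intervalIntegral.integral_eq_sub_of_hasDeriv_right_of_le hx1 hcont hderiv hint
  rw [intervalIntegral.integral_of_le hx1, integral_Ioc_eq_integral_Ioo] at this
  rw [this]
  simp

lemma EllK_le {x : ℝ} (hx0 : 0 ≤ x) (hx1 : x < 1) : EllK x ≤ 2 - Real.log (1-x) := by
  have hsplit : Ioo (0:ℝ) 1 = Ioc 0 x ∪ Ioo x 1 := (Set.Ioc_union_Ioo_eq_Ioo hx0 hx1).symm
  have hdisj : Disjoint (Ioc (0:ℝ) x) (Ioo x 1) := by
    rw [Set.disjoint_left]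
    rintro u ⟨_, h1⟩ ⟨h2, _⟩
    linarith
  have hsub1 : Ioc (0:ℝ) x ⊆ Ioo 0 1 := fun u hu => ⟨hu.1, lt_of_le_of_lt hu.2 hx1⟩
  have hsub2 : Ioo x 1 ⊆ Ioo 0 1 := fun u hu => ⟨lt_of_le_of_lt hx0 hu.1, hu.2⟩
  have hi := inner_integrable hx0 hx1
  rw [ellK_as_set, hsplit,
    setIntegral_union hdisj measurableSet_Ioo (hi.mono_set hsub1) (hi.mono_set hsub2)]
  have hb1 : ∫ u in Ioc (0:ℝ) x, 1 / Real.sqrt ((1 - u^2) * (1 - x^2 * u^2))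
      ≤ -Real.log (1-x) := by
    rw [← log_piece hx0 hx1, ← integral_Ioc_eq_integral_Ioo]
    apply setIntegral_mono_on (hi.mono_set hsub1) ?_ measurableSet_Ioc
    · intro u hu
      obtain ⟨hu0, hux⟩ := hu
      have hu1 : u < 1 := lt_of_le_of_lt hux hx1
      have key : (1-u)^2 ≤ (1 - u^2) * (1 - x^2 * u^2) := by
        have e : (1 - u^2) * (1 - x^2*u^2) = ((1-u)*(1-x*u))*((1+u)*(1+x*u)) := by ring
        have e1 : (1-u)^2 ≤ (1-u)*(1-x*u) := by
          nlinarith [mul_nonneg (mul_nonneg (by linarith : (0:ℝ) ≤ 1-u) hu0.le)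
            (by linarith : (0:ℝ) ≤ 1-x)]
        have e2 : (1:ℝ) ≤ (1+u)*(1+x*u) := by nlinarith
        have e3 : (0:ℝ) ≤ (1-u)*(1-x*u) := by nlinarith
        nlinarith
      have h2 : Real.sqrt ((1-u)^2) ≤ Real.sqrt ((1 - u^2) * (1 - x^2 * u^2)) :=
        Real.sqrt_le_sqrt key
      rw [Real.sqrt_sq (by linarith : (0:ℝ) ≤ 1-u)] at h2
      calc 1 / Real.sqrt ((1 - u^2) * (1 - x^2 * u^2)) ≤ 1 / (1-u) :=
            one_div_le_one_div_of_le (by linarith) h2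
        _ = (1-u)⁻¹ := one_div _
    · apply (ContinuousOn.integrableOn_Icc ?_).mono_set Set.Ioc_subset_Icc_self
      apply ContinuousOn.inv₀ (by fun_prop)
      intro u hu
      have := hu.2
      intro h; linarith [lt_of_le_of_lt hu.2 hx1]
  have hb2 : ∫ u in Ioo x 1, 1 / Real.sqrt ((1 - u^2) * (1 - x^2 * u^2)) ≤ 2 := by
    have hsx : 0 < Real.sqrt (1-x) := Real.sqrt_pos.mpr (by linarith)
    have hbd : ∀ u ∈ Ioo x 1, 1 / Real.sqrt ((1 - u^2) * (1 - x^2 * u^2))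
        ≤ (Real.sqrt (1-x))⁻¹ * (1 / Real.sqrt (1-u)) := by
      intro u hu
      obtain ⟨hux, hu1⟩ := hu
      have hu0 : 0 < u := lt_of_le_of_lt hx0 hux
      have key : (1-x)*(1-u) ≤ (1 - u^2) * (1 - x^2 * u^2) := by
        have e : (1 - u^2) * (1 - x^2*u^2) = ((1-u)*(1-x*u))*((1+u)*(1+x*u)) := by ring
        have e1 : (1-x)*(1-u) ≤ (1-u)*(1-x*u) := by nlinarith [mul_nonneg hx0 (sq_nonneg (1-u))]
        have e2 : (1:ℝ) ≤ (1+u)*(1+x*u) := by nlinarith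
        have e3 : (0:ℝ) ≤ (1-u)*(1-x*u) := by nlinarith
        nlinarith
      have h2 : Real.sqrt ((1-x)*(1-u)) ≤ Real.sqrt ((1 - u^2) * (1 - x^2 * u^2)) :=
        Real.sqrt_le_sqrt key
      have h3 : 0 < Real.sqrt ((1-x)*(1-u)) := Real.sqrt_pos.mpr (by nlinarith)
      calc 1 / Real.sqrt ((1 - u^2) * (1 - x^2 * u^2)) ≤ 1 / Real.sqrt ((1-x)*(1-u)) :=
            one_div_le_one_div_of_le h3 h2
        _ = (Real.sqrt (1-x))⁻¹ * (1 / Real.sqrt (1-u)) := by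
            rw [Real.sqrt_mul (by linarith) (1-u)]
            rw [one_div, mul_inv, one_div]
    have hintb : IntegrableOn (fun u : ℝ => (Real.sqrt (1-x))⁻¹ * (1 / Real.sqrt (1-u)))
        (Ioo x 1) := ((sqrt_int x).const_mul _)
    calc ∫ u in Ioo x 1, 1 / Real.sqrt ((1 - u^2) * (1 - x^2 * u^2))
        ≤ ∫ u in Ioo x 1, (Real.sqrt (1-x))⁻¹ * (1 / Real.sqrt (1-u)) :=
          setIntegral_mono_on (hi.mono_set hsub2) hintb measurableSet_Ioo hbd
      _ = (Real.sqrt (1-x))⁻¹ * (2 * Real.sqrt (1-x)) := by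
          rw [integral_const_mul, sqrt_piece hx1.le]
      _ = 2 := by field_simp
  linarith

lemma landen {x : ℝ} (hx : 0 < x) (hx1 : x < 1) :
    EllK (2 * Real.sqrt x / (1+x)) = (1+x) * EllK x := by
  set v : ℝ → ℝ := fun u => (1+x)*u/(1+x*u^2) with hv
  set v' : ℝ → ℝ := fun u => (1+x)*(1-x*u^2)/(1+x*u^2)^2 with hv'
  have hxp : (0:ℝ) < 1 + x := by linarith
  have hdenpos : ∀ u : ℝ, 0 < 1 + x*u^2 := fun u => by nlinarith [sq_nonneg u]
  have hder : ∀ u ∈ Ioo (0:ℝ) 1, HasDerivWithinAt v (v' u) (Ioo 0 1) u := by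
    intro u hu
    have h1 : HasDerivAt (fun u : ℝ => (1+x)*u) (1+x) u := by
      simpa using (hasDerivAt_id u).const_mul (1+x)
    have h2 : HasDerivAt (fun u : ℝ => 1+x*u^2) (x*(2*u)) u := by
      simpa using ((hasDerivAt_pow 2 u).const_mul x).const_add 1
    have h3 := h1.div h2 (hdenpos u).ne'
    have heq : ((1+x) * (1+x*u^2) - (1+x)*u*(x*(2*u))) / (1+x*u^2)^2 = v' u := by
      rw [hv']
      field_simp
      ring
    rw [heq] at h3
    exact h3.hasDerivWithinAt
  have hinj : InjOn v (Ioo (0:ℝ) 1) := by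
    apply StrictMonoOn.injOn
    intro u₁ hu₁ u₂ hu₂ h12
    rw [hv]
    simp only
    rw [div_lt_div_iff₀ (hdenpos u₁) (hdenpos u₂)]
    have h1 : x*u₁*u₂ < 1 := by
      nlinarith [mul_lt_mul_of_pos_right hu₁.2 hu₂.1,
        mul_lt_mul_of_pos_right hx1 (mul_pos hu₁.1 hu₂.1), hu₂.2]
    nlinarith [mul_pos (mul_pos hxp (sub_pos.2 h12)) (sub_pos.2 h1)]
  have himg : v '' Ioo 0 1 = Ioo (0:ℝ) 1 := by
    apply Set.Subset.antisymm
    · rintro y ⟨u, hu, rfl⟩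
      obtain ⟨hu0, hu1⟩ := hu
      constructor
      · apply div_pos (by nlinarith) (hdenpos u)
      · rw [div_lt_one (hdenpos u)]
        have hxu : x*u < 1 := by nlinarith
        nlinarith [mul_pos (sub_pos.2 hu1) (sub_pos.2 hxu)]
    · have hcont : ContinuousOn v (Icc (0:ℝ) 1) := by
        apply ContinuousOn.div (by fun_prop) (by fun_prop)
        intro u _; exact (hdenpos u).ne'
      have := intermediate_value_Ioo (by norm_num : (0:ℝ) ≤ 1) hcont
      simpa [hv, mul_one, one_pow, div_self hxp.ne'] using this
  have key := MeasureTheory.integral_image_eq_integral_abs_deriv_smul measurableSet_Ioo hder hinj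
    (fun y => 1 / Real.sqrt ((1 - y^2) * (1 - (2 * Real.sqrt x / (1+x))^2 * y^2)))
  rw [himg] at key
  rw [ellK_as_set, key, ellK_as_set, ← integral_const_mul]
  apply setIntegral_congr_fun measurableSet_Ioo
  intro u hu
  obtain ⟨hu0, hu1⟩ := hu
  have hA : (0:ℝ) < 1 + x*u^2 := hdenpos u
  have hB : (0:ℝ) < 1 - x*u^2 := by nlinarith
  have hP : (0:ℝ) < (1 - u^2) * (1 - x^2*u^2) := inner_pos hx.le hx1 ⟨hu0, hu1⟩
  have hk2 : (2 * Real.sqrt x / (1+x))^2 = 4*x/(1+x)^2 := by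
    rw [div_pow, mul_pow, Real.sq_sqrt hx.le]
    ring_nf
  have e1 : 1 - (v u)^2 = (1 - u^2) * (1 - x^2*u^2) / (1+x*u^2)^2 := by
    rw [hv]; field_simp; ring
  have e2 : 1 - (2 * Real.sqrt x / (1+x))^2 * (v u)^2 = (1-x*u^2)^2 / (1+x*u^2)^2 := by
    rw [hk2, hv]; field_simp; ring
  have e3 : (1 - (v u)^2) * (1 - (2 * Real.sqrt x / (1+x))^2 * (v u)^2)
      = ((1 - u^2) * (1 - x^2*u^2)) * ((1-x*u^2) / (1+x*u^2)^2)^2 := by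
    rw [e1, e2]; field_simp
  have e4 : Real.sqrt ((1 - (v u)^2) * (1 - (2 * Real.sqrt x / (1+x))^2 * (v u)^2))
      = Real.sqrt ((1 - u^2) * (1 - x^2*u^2)) * ((1-x*u^2) / (1+x*u^2)^2) := by
    rw [e3, Real.sqrt_mul hP.le, Real.sqrt_sq (by positivity)]
  have hvabs : |v' u| = (1+x)*(1-x*u^2)/(1+x*u^2)^2 := by
    rw [hv']
    exact abs_of_pos (by positivity)
  show |v' u| • (1 / Real.sqrt ((1 - (v u)^2) * (1 - (2 * Real.sqrt x / (1+x))^2 * (v u)^2)))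
      = (1+x) * (1 / Real.sqrt ((1 - u^2) * (1 - x^2 * u^2)))
  rw [e4, hvabs, smul_eq_mul]
  have hsP : 0 < Real.sqrt ((1 - u^2) * (1 - x^2*u^2)) := Real.sqrt_pos.mpr hP
  field_simp

lemma sqrt_mem {k : ℝ} (hk : k ∈ Ioo (0:ℝ) 1) : Real.sqrt (1-k^2) ∈ Ioo (0:ℝ) 1 := by
  obtain ⟨hk0, hk1⟩ := hk
  constructor
  · exact Real.sqrt_pos.mpr (by nlinarith)
  · have h1 : 1 - k^2 < 1 := by nlinarith
    nlinarith [Real.sq_sqrt (show (0:ℝ) ≤ 1-k^2 by nlinarith), Real.sqrt_nonneg (1-k^2)]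

lemma ellK'_transform {k : ℝ} (hk : k ∈ Ioo (0:ℝ) 1) :
    EllK' ((1 - Real.sqrt (1-k^2))/(1 + Real.sqrt (1-k^2)))
      = (1 + Real.sqrt (1-k^2)) * EllK' k := by
  set s := Real.sqrt (1-k^2) with hs
  obtain ⟨hs0, hs1⟩ := sqrt_mem hk
  have hsp : (0:ℝ) < 1 + s := by linarith
  have hφ : 1 - ((1-s)/(1+s))^2 = (2*Real.sqrt s/(1+s))^2 := by
    have h2 : (2*Real.sqrt s/(1+s))^2 = 4*s/(1+s)^2 := by
      rw [div_pow, mul_pow, Real.sq_sqrt hs0.le]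
      norm_num [hs]
    rw [h2]
    field_simp
    ring
  have : EllK' ((1-s)/(1+s)) = EllK (2*Real.sqrt s/(1+s)) := by
    rw [EllK', hφ, Real.sqrt_sq (by positivity)]
  rw [this, landen hs0 hs1]
  rfl

lemma ellK'_anti : AntitoneOn EllK' (Ioo (0:ℝ) 1) := by
  intro k₁ hk₁ k₂ hk₂ h12
  obtain ⟨a0, a1⟩ := sqrt_mem hk₁
  obtain ⟨b0, b1⟩ := sqrt_mem hk₂
  exact EllK_mono b0.le (Real.sqrt_le_sqrt (by nlinarith [hk₁.1])) a1

lemma ellK'_nonneg (k : ℝ) : 0 ≤ EllK' k := EllK_nonneg _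

lemma ellK'_le {k : ℝ} (hk : k ∈ Ioo (0:ℝ) 1) : EllK' k ≤ 3 - 2*Real.log k := by
  obtain ⟨hk0, hk1⟩ := hk
  set s := Real.sqrt (1-k^2) with hs
  have hs0 : 0 ≤ s := Real.sqrt_nonneg _
  have hs1 : s ≤ 1 := by
    rw [hs]
    exact Real.sqrt_le_one.mpr (by nlinarith)
  have hss : s^2 = 1 - k^2 := Real.sq_sqrt (by nlinarith)
  have h1 : k^2/2 ≤ 1 - s := by nlinarith
  have h2 : Real.log (k^2/2) ≤ Real.log (1-s) := Real.log_le_log (by positivity) h1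
  have h3 : Real.log (k^2/2) = 2*Real.log k - Real.log 2 := by
    rw [Real.log_div (by positivity) (by norm_num), Real.log_pow]
    push_cast
    ring
  have h4 : Real.log 2 ≤ 1 := by
    have := Real.log_le_sub_one_of_pos (show (0:ℝ) < 2 by norm_num)
    linarith
  have h5 := EllK_le hs0 (by nlinarith : s < 1)
  calc EllK' k = EllK s := rfl
    _ ≤ 2 - Real.log (1-s) := h5
    _ ≤ 2 - (2*Real.log k - Real.log 2) := by linarith
    _ ≤ 3 - 2*Real.log k := by linarith

lemma cube_log_le {k : ℝ} (hk0 : 0 < k) (hk1 : k < 1) :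
    (3 - 2*Real.log k)^3 ≤ 5000000 * (1 / Real.sqrt k) := by
  set t := -Real.log k with ht
  have ht0 : 0 ≤ t := by
    rw [ht, neg_nonneg]
    exact Real.log_nonpos hk0.le hk1.le
  have hks : Real.sqrt k = Real.exp (-(t/2)) := by
    have hk : k = Real.exp (-t) := by rw [ht, neg_neg, Real.exp_log hk0]
    rw [hk, show Real.exp (-t) = (Real.exp (-(t/2)))^2 by
      rw [pow_two, ← Real.exp_add]; ring_nf]
    exact Real.sqrt_sq (Real.exp_pos _).le
  have hinv : 1 / Real.sqrt k = Real.exp (t/2) := by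
    rw [hks, one_div, ← Real.exp_neg, neg_neg]
  have e1 : t/8 + 1 ≤ Real.exp (t/8) := Real.add_one_le_exp _
  have e2 : (1 + t/8)^4 ≤ (Real.exp (t/8))^4 := by
    apply pow_le_pow_left₀ (by linarith) (by linarith)
  have e3 : (Real.exp (t/8))^4 = Real.exp (t/2) := by
    rw [← Real.exp_nat_mul]
    ring_nf
  have e4 : 1 ≤ Real.exp (t/2) := Real.one_le_exp (by linarith)
  have hgoal : 3 - 2*Real.log k = 3 + 2*t := by rw [ht]; ring
  clear_value t
  rw [hgoal, hinv]
  have h6 : (3+2*t)^3 ≤ 2500000 + 610*t^4 := by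
    nlinarith [ht0, sq_nonneg t, mul_nonneg (mul_nonneg ht0 ht0) (sq_nonneg (t-1)),
      sq_nonneg (t*t - t), mul_nonneg ht0 (sq_nonneg (t-1))]
  have h7 : 1 + (t/8)^4 ≤ (1 + t/8)^4 := by
    nlinarith [ht0, mul_nonneg ht0 ht0, mul_nonneg (mul_nonneg ht0 ht0) ht0]
  have hpoly : (3+2*t)^3 ≤ 2500000*((1 + t/8)^4) + 2500000 := by
    nlinarith [h6, h7, ht0, pow_nonneg ht0 4]
  rw [e3] at e2
  linarith [hpoly, e2, e4]

lemma inv_sqrt_self_int : IntegrableOn (fun k : ℝ => 1 / Real.sqrt k) (Ioo 0 1) := by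
  have h1 : IntervalIntegrable (fun u : ℝ => u ^ (-(1/2) : ℝ)) volume 0 1 :=
    intervalIntegral.intervalIntegrable_rpow' (by norm_num)
  have h3 : IntegrableOn (fun u : ℝ => u ^ (-(1/2) : ℝ)) (Ioo 0 1) :=
    (intervalIntegrable_iff_integrableOn_Ioo_of_le (by norm_num)).mp h1
  refine h3.congr_fun (fun u hu => ?_) measurableSet_Ioo
  beta_reduce
  rw [Real.rpow_neg hu.1.le, Real.sqrt_eq_rpow]
  norm_num

lemma ellK'_aemeas : AEMeasurable EllK' (volume.restrict (Ioo (0:ℝ) 1)) :=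
  aemeasurable_restrict_of_antitoneOn measurableSet_Ioo ellK'_anti

lemma f_int : IntegrableOn (fun k : ℝ => k * (EllK' k)^3) (Ioo 0 1) := by
  apply Integrable.mono' (inv_sqrt_self_int.const_mul 5000000)
  · exact ((aemeasurable_id'.mul ((ellK'_aemeas.pow_const 3))).aestronglyMeasurable)
  · filter_upwards [ae_restrict_mem measurableSet_Ioo] with k hk
    obtain ⟨hk0, hk1⟩ := hk
    have h1 : 0 ≤ EllK' k := ellK'_nonneg k
    have h2 : (EllK' k)^3 ≤ (3 - 2*Real.log k)^3 :=
      pow_le_pow_left₀ h1 (ellK'_le ⟨hk0, hk1⟩) 3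
    rw [Real.norm_eq_abs, abs_of_nonneg (mul_nonneg hk0.le (pow_nonneg h1 3))]
    calc k * (EllK' k)^3 ≤ 1 * (3 - 2*Real.log k)^3 := by
          apply mul_le_mul hk1.le h2 (pow_nonneg h1 3) (by norm_num)
      _ = (3 - 2*Real.log k)^3 := one_mul _
      _ ≤ 5000000 * (1 / Real.sqrt k) := cube_log_le hk0 hk1

lemma g_int : IntegrableOn
    (fun k : ℝ => 2*k*(1 - Real.sqrt (1-k^2))/Real.sqrt (1-k^2) * (EllK' k)^3) (Ioo 0 1) := by
  apply Integrable.mono' ((sqrt_int 0).const_mul 250)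
  · apply AEMeasurable.aestronglyMeasurable
    apply AEMeasurable.mul ?_ (ellK'_aemeas.pow_const 3)
    apply Measurable.aemeasurable
    fun_prop
  · filter_upwards [ae_restrict_mem measurableSet_Ioo] with k hk
    obtain ⟨hk0, hk1⟩ := hk
    set s := Real.sqrt (1-k^2) with hs
    obtain ⟨hs0, hs1⟩ := sqrt_mem ⟨hk0, hk1⟩
    have hss : s^2 = 1 - k^2 := Real.sq_sqrt (by nlinarith)
    have hK0 : 0 ≤ EllK' k := ellK'_nonneg k
    have hKle : EllK' k ≤ 3 - 2*Real.log k := ellK'_le ⟨hk0, hk1⟩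
    have hlogk : -(k * Real.log k) ≤ 1 - k := by
      have := Real.log_le_sub_one_of_pos (show (0:ℝ) < 1/k by positivity)
      rw [Real.log_div one_ne_zero (ne_of_gt hk0), Real.log_one] at this
      have h2 := mul_le_mul_of_nonneg_left this hk0.le
      have h3 : k * (1/k - 1) = 1 - k := by field_simp
      nlinarith
    have hk5 : k * (3 - 2*Real.log k) ≤ 5 := by nlinarith
    have hlg : Real.log k ≤ 0 := Real.log_nonpos hk0.le hk1.le
    have hk5' : 0 ≤ k * (3 - 2*Real.log k) := mul_nonneg hk0.le (by linarith)
    have hcube : (k * EllK' k)^3 ≤ 125 := by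
      calc (k * EllK' k)^3 ≤ (k * (3 - 2*Real.log k))^3 :=
            pow_le_pow_left₀ (mul_nonneg hk0.le hK0) (mul_le_mul_of_nonneg_left hKle hk0.le) 3
        _ ≤ 5^3 := pow_le_pow_left₀ hk5' hk5 3
        _ = 125 := by norm_num
    have h1s : 1 - s ≤ k^2 := by nlinarith
    have hN : 2*k*(1 - s) * (EllK' k)^3 ≤ 250 := by
      have e1 : 2*k*(1-s) * (EllK' k)^3 ≤ 2*k*k^2 * (EllK' k)^3 := by
        apply mul_le_mul_of_nonneg_right ?_ (pow_nonneg hK0 3)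
        nlinarith
      have e2 : 2*k*k^2 * (EllK' k)^3 = 2 * (k * EllK' k)^3 := by ring
      nlinarith
    have hNpos : 0 ≤ 2*k*(1 - s) * (EllK' k)^3 := by
      apply mul_nonneg ?_ (pow_nonneg hK0 3)
      nlinarith
    have hks : Real.sqrt (1-k) ≤ s := Real.sqrt_le_sqrt (by nlinarith)
    have hkpos : 0 < Real.sqrt (1-k) := Real.sqrt_pos.mpr (by linarith)
    have hqpos : 0 ≤ 2*k*(1-s)/s * (EllK' k)^3 := by
      apply mul_nonneg (div_nonneg ?_ hs0.le) (pow_nonneg hK0 3)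
      nlinarith
    rw [Real.norm_eq_abs, abs_of_nonneg hqpos]
    calc 2*k*(1-s)/s * (EllK' k)^3 = (2*k*(1-s) * (EllK' k)^3) / s := by ring
      _ ≤ 250 / Real.sqrt (1-k) := div_le_div₀ (by norm_num) hN hkpos hks
      _ = 250 * (1 / Real.sqrt (1-k)) := by ring

lemma outer_subst (g : ℝ → ℝ) :
    ∫ t in Ioo (0:ℝ) 1, g t = ∫ k in Ioo (0:ℝ) 1,
      |2*k/(Real.sqrt (1-k^2)*(1+Real.sqrt (1-k^2))^2)| •
        g ((1 - Real.sqrt (1-k^2))/(1 + Real.sqrt (1-k^2))) := by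
  set φ : ℝ → ℝ := fun k => (1 - Real.sqrt (1-k^2))/(1 + Real.sqrt (1-k^2)) with hφ
  set φ' : ℝ → ℝ := fun k => 2*k/(Real.sqrt (1-k^2)*(1+Real.sqrt (1-k^2))^2) with hφ'
  have hder : ∀ k ∈ Ioo (0:ℝ) 1, HasDerivWithinAt φ (φ' k) (Ioo 0 1) k := by
    intro k hk
    obtain ⟨hs0, hs1⟩ := sqrt_mem hk
    have hne : (1:ℝ) - k^2 ≠ 0 := by
      have := Real.sqrt_pos.mp hs0; linarith
    have hss : Real.sqrt (1-k^2)^2 = 1 - k^2 := Real.sq_sqrt (by linarith [Real.sqrt_pos.mp hs0])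
    have h0 : HasDerivAt (fun x : ℝ => 1 - x^2) (-(2*k^(2-1))) k :=
      (hasDerivAt_pow 2 k).const_sub 1
    have h1 : HasDerivAt (fun x : ℝ => Real.sqrt (1-x^2))
        (-(2*k^(2-1)) / (2 * Real.sqrt (1-k^2))) k := h0.sqrt hne
    have h2 : HasDerivAt (fun x : ℝ => 1 - Real.sqrt (1-x^2))
        (-(-(2*k^(2-1)) / (2 * Real.sqrt (1-k^2)))) k := h1.const_sub 1
    have h3 : HasDerivAt (fun x : ℝ => 1 + Real.sqrt (1-x^2))
        (-(2*k^(2-1)) / (2 * Real.sqrt (1-k^2))) k := h1.const_add 1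
    have h4 := h2.div h3 (by positivity)
    have heq : (-(-(2*k^(2-1)) / (2 * Real.sqrt (1-k^2))) * (1 + Real.sqrt (1-k^2)) -
        (1 - Real.sqrt (1-k^2)) * (-(2*k^(2-1)) / (2 * Real.sqrt (1-k^2)))) /
        (1 + Real.sqrt (1-k^2))^2 = φ' k := by
      rw [hφ']
      have hsne : Real.sqrt (1-k^2) ≠ 0 := hs0.ne'
      have hpne : (1:ℝ) + Real.sqrt (1-k^2) ≠ 0 := by positivity
      field_simp
      ring
    rw [heq] at h4
    exact h4.hasDerivWithinAt
  have hinj : InjOn φ (Ioo (0:ℝ) 1) := by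
    apply StrictMonoOn.injOn
    intro k₁ hk₁ k₂ hk₂ h12
    obtain ⟨a0, a1⟩ := sqrt_mem hk₁
    obtain ⟨b0, b1⟩ := sqrt_mem hk₂
    have hlt : Real.sqrt (1-k₂^2) < Real.sqrt (1-k₁^2) := by
      apply Real.sqrt_lt_sqrt (by nlinarith [hk₂.1, hk₂.2])
      nlinarith [hk₁.1]
    rw [hφ]
    simp only
    rw [div_lt_div_iff₀ (by positivity) (by positivity)]
    nlinarith
  have himg : φ '' Ioo 0 1 = Ioo (0:ℝ) 1 := by
    apply Set.Subset.antisymm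
    · rintro y ⟨k, hk, rfl⟩
      obtain ⟨hs0, hs1⟩ := sqrt_mem hk
      constructor
      · apply div_pos (by linarith) (by linarith)
      · rw [div_lt_one (by linarith)]
        linarith
    · have hcont : ContinuousOn φ (Icc (0:ℝ) 1) := by
        apply ContinuousOn.div
        · fun_prop
        · fun_prop
        · intro k _
          positivity
      have := intermediate_value_Ioo (by norm_num : (0:ℝ) ≤ 1) hcont
      simpa [hφ, Real.sqrt_one, Real.sqrt_zero] using this
  have key := MeasureTheory.integral_image_eq_integral_abs_deriv_smul measurableSet_Ioo
    hder hinj g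
  rw [himg] at key
  exact key

lemma Ioo_eq1 : ∫ t in Ioo (0:ℝ) 1, (EllK' t)^3
    = (∫ k in Ioo (0:ℝ) 1, 2*k*(1 - Real.sqrt (1-k^2))/Real.sqrt (1-k^2) * (EllK' k)^3)
      + 4 * ∫ k in Ioo (0:ℝ) 1, k * (EllK' k)^3 := by
  rw [outer_subst (fun t => (EllK' t)^3)]
  rw [← MeasureTheory.integral_const_mul 4 _, ← integral_add g_int (f_int.const_mul 4)]
  apply setIntegral_congr_fun measurableSet_Ioo
  intro k hk
  obtain ⟨hs0, hs1⟩ := sqrt_mem hk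
  obtain ⟨hk0, hk1⟩ := hk
  set s := Real.sqrt (1-k^2) with hs
  have habs : |2*k/(s*(1+s)^2)| = 2*k/(s*(1+s)^2) := abs_of_pos (by positivity)
  simp only [smul_eq_mul]
  rw [habs, ellK'_transform ⟨hk0, hk1⟩]
  rw [mul_pow, ← hs]
  have hsne : s ≠ 0 := hs0.ne'
  have hpne : (1:ℝ) + s ≠ 0 := by positivity
  field_simp
  ring

lemma Ioo_eq2 : ∫ t in Ioo (0:ℝ) 1, t * (EllK' t)^3
    = ∫ k in Ioo (0:ℝ) 1, 2*k*(1 - Real.sqrt (1-k^2))/Real.sqrt (1-k^2) * (EllK' k)^3 := by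
  rw [outer_subst (fun t => t * (EllK' t)^3)]
  apply setIntegral_congr_fun measurableSet_Ioo
  intro k hk
  obtain ⟨hs0, hs1⟩ := sqrt_mem hk
  obtain ⟨hk0, hk1⟩ := hk
  set s := Real.sqrt (1-k^2) with hs
  have habs : |2*k/(s*(1+s)^2)| = 2*k/(s*(1+s)^2) := abs_of_pos (by positivity)
  simp only [smul_eq_mul]
  rw [habs, ellK'_transform ⟨hk0, hk1⟩]
  rw [mul_pow, ← hs]
  have hsne : s ≠ 0 := hs0.ne'
  have hpne : (1:ℝ) + s ≠ 0 := by positivity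
  field_simp

theorem stmt2 :
    ∫ k in (0:ℝ)..1, (EllK' k)^3 = 5 * ∫ k in (0:ℝ)..1, k * (EllK' k)^3 := by
  rw [intervalIntegral.integral_of_le (by norm_num : (0:ℝ) ≤ 1),
    intervalIntegral.integral_of_le (by norm_num : (0:ℝ) ≤ 1),
    integral_Ioc_eq_integral_Ioo, integral_Ioc_eq_integral_Ioo]
  rw [Ioo_eq1, ← Ioo_eq2]
  ring
end

section
/- The complete elliptic integral of the first kind at the first singular value satisfies K(1/√2) = Γ(1/4)²/(4√π). -/
open MeasureTheory Set Real

lemma betaR_aux : (∫ x in Set.Ioo (0:ℝ) 1, x ^ (-(3/4):ℝ) * (1 - x) ^ (-(1/2):ℝ) : ℝ)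
    = Real.Gamma (1/4) * Real.Gamma (1/2) / Real.Gamma (3/4) := by
  have hB : ((∫ x in Set.Ioo (0:ℝ) 1, x ^ (-(3/4):ℝ) * (1 - x) ^ (-(1/2):ℝ) : ℝ) : ℂ)
      = Complex.betaIntegral (1/4) (1/2) := by
    rw [Complex.betaIntegral]
    rw [show (∫ x in Set.Ioo (0:ℝ) 1, x ^ (-(3/4):ℝ) * (1 - x) ^ (-(1/2):ℝ))
        = ∫ x in (0:ℝ)..1, x ^ (-(3/4):ℝ) * (1 - x) ^ (-(1/2):ℝ) by
      rw [intervalIntegral.integral_of_le zero_le_one, integral_Ioc_eq_integral_Ioo]]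
    rw [← intervalIntegral.integral_ofReal]
    apply intervalIntegral.integral_congr
    intro x hx
    rw [Set.uIcc_of_le zero_le_one] at hx
    push_cast
    rw [Complex.ofReal_cpow hx.1, Complex.ofReal_cpow (by linarith [hx.2] : (0:ℝ) ≤ 1 - x)]
    push_cast
    norm_num
  have hG := Complex.Gamma_mul_Gamma_eq_betaIntegral
    (s := 1/4) (t := 1/2) (by norm_num) (by norm_num)
  rw [← hB] at hG
  have h34 : (1/4 : ℂ) + 1/2 = ((3/4 : ℝ) : ℂ) := by norm_num
  have h14 : (1/4 : ℂ) = ((1/4 : ℝ) : ℂ) := by norm_num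
  have h12 : (1/2 : ℂ) = ((1/2 : ℝ) : ℂ) := by norm_num
  rw [h34, h14, h12, Complex.Gamma_ofReal, Complex.Gamma_ofReal, Complex.Gamma_ofReal] at hG
  have hne : Real.Gamma (3/4) ≠ 0 := (Real.Gamma_pos_of_pos (by norm_num)).ne'
  have h : Real.Gamma (1/4) * Real.Gamma (1/2)
      = Real.Gamma (3/4) * ∫ x in Set.Ioo (0:ℝ) 1, x ^ (-(3/4):ℝ) * (1 - x) ^ (-(1/2):ℝ) := by
    exact_mod_cast hG
  rw [h, mul_div_cancel_left₀ _ hne]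

lemma sub2_aux : (∫ t in Set.Ioo (0:ℝ) 1, 1 / Real.sqrt (1 - t^4))
    = (1/4) * ∫ x in Set.Ioo (0:ℝ) 1, x ^ (-(3/4):ℝ) * (1 - x) ^ (-(1/2):ℝ) := by
  have himg : (fun x : ℝ => x ^ ((1/4):ℝ)) '' Set.Ioo 0 1 = Set.Ioo 0 1 := by
    ext y
    constructor
    · rintro ⟨x, hx, rfl⟩
      exact ⟨Real.rpow_pos_of_pos hx.1 _, Real.rpow_lt_one hx.1.le hx.2 (by norm_num)⟩
    · rintro ⟨hy0, hy1⟩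
      refine ⟨y ^ (4:ℝ), ⟨Real.rpow_pos_of_pos hy0 _, Real.rpow_lt_one hy0.le hy1 (by norm_num)⟩, ?_⟩
      show (y ^ (4:ℝ)) ^ ((1/4):ℝ) = y
      rw [← Real.rpow_mul hy0.le]
      norm_num
  have hderiv : ∀ x ∈ Set.Ioo (0:ℝ) 1,
      HasDerivWithinAt (fun x : ℝ => x ^ ((1/4):ℝ))
        ((1/4) * x ^ ((1/4:ℝ) - 1)) (Set.Ioo 0 1) x := by
    intro x hx
    simpa [mul_comm] using
      (Real.hasDerivAt_rpow_const (x := x) (p := (1/4:ℝ)) (Or.inl hx.1.ne')).hasDerivWithinAt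
  have hinj : Set.InjOn (fun x : ℝ => x ^ ((1/4):ℝ)) (Set.Ioo 0 1) := by
    intro a ha b hb h
    have h2 : (a ^ ((1/4):ℝ)) ^ (4:ℝ) = (b ^ ((1/4):ℝ)) ^ (4:ℝ) := by
      simp only at h; rw [h]
    rw [← Real.rpow_mul ha.1.le, ← Real.rpow_mul hb.1.le] at h2
    norm_num at h2
    exact h2
  have key := MeasureTheory.integral_image_eq_integral_abs_deriv_smul
    measurableSet_Ioo hderiv hinj (fun t => 1 / Real.sqrt (1 - t^4))
  rw [himg] at key
  rw [key]
  rw [← MeasureTheory.integral_const_mul]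
  apply MeasureTheory.setIntegral_congr_fun measurableSet_Ioo
  intro x hx
  have hx0 := hx.1
  have hx1 := hx.2
  have hq : ((x:ℝ) ^ ((1/4):ℝ)) ^ (4:ℕ) = x := by
    rw [← Real.rpow_natCast (x ^ ((1/4):ℝ)) 4, ← Real.rpow_mul hx0.le]
    norm_num
  have h1x : (0:ℝ) ≤ 1 - x := by linarith
  simp only [smul_eq_mul]
  rw [hq]
  rw [abs_of_pos (by positivity : (0:ℝ) < 1/4 * x ^ ((1/4:ℝ) - 1))]
  rw [show ((1/4:ℝ) - 1) = -(3/4) by norm_num]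
  rw [Real.sqrt_eq_rpow, Real.rpow_neg h1x]
  ring

lemma sub1_aux : (∫ u in Set.Ioo (0:ℝ) 1, 1 / Real.sqrt ((1 - u^2) * (1 - (1/Real.sqrt 2)^2 * u^2)))
    = Real.sqrt 2 * ∫ t in Set.Ioo (0:ℝ) 1, 1 / Real.sqrt (1 - t^4) := by
  set f : ℝ → ℝ := fun t => Real.sqrt (1 - t^2) with hf
  set f' : ℝ → ℝ := fun t => -(t / Real.sqrt (1 - t^2)) with hf'
  have himg : f '' Set.Ioo 0 1 = Set.Ioo 0 1 := by
    ext y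
    constructor
    · rintro ⟨t, ht, rfl⟩
      have h1 : (0:ℝ) < 1 - t^2 := by nlinarith [ht.1, ht.2]
      exact ⟨Real.sqrt_pos.mpr h1, (Real.sqrt_lt' one_pos).mpr (by nlinarith [ht.1])⟩
    · rintro ⟨hy0, hy1⟩
      refine ⟨Real.sqrt (1 - y^2), ⟨Real.sqrt_pos.mpr (by nlinarith),
        (Real.sqrt_lt' one_pos).mpr (by nlinarith)⟩, ?_⟩
      show Real.sqrt (1 - Real.sqrt (1 - y^2) ^ 2) = y
      rw [Real.sq_sqrt (by nlinarith : (0:ℝ) ≤ 1 - y^2)]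
      rw [show (1 - (1 - y^2)) = y^2 by ring]
      exact Real.sqrt_sq hy0.le
  have hderiv : ∀ t ∈ Set.Ioo (0:ℝ) 1, HasDerivWithinAt f (f' t) (Set.Ioo 0 1) t := by
    intro t ht
    have h1 : (0:ℝ) < 1 - t^2 := by nlinarith [ht.1, ht.2]
    have hs : Real.sqrt (1 - t^2) ≠ 0 := (Real.sqrt_pos.mpr h1).ne'
    have hinner : HasDerivAt (fun t : ℝ => 1 - t^2) (-(2*t)) t := by
      simpa using ((hasDerivAt_pow 2 t).const_sub 1)
    have := (Real.hasDerivAt_sqrt h1.ne').comp t hinner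
    refine HasDerivAt.hasDerivWithinAt ?_
    refine this.congr_deriv ?_
    rw [hf']
    field_simp
  have hinj : Set.InjOn f (Set.Ioo 0 1) := by
    intro a ha b hb h
    have h2 : 1 - a^2 = 1 - b^2 := by
      have := congrArg (fun z => z^2) h
      simpa [hf, Real.sq_sqrt (by nlinarith [ha.1, ha.2] : (0:ℝ) ≤ 1 - a^2),
        Real.sq_sqrt (by nlinarith [hb.1, hb.2] : (0:ℝ) ≤ 1 - b^2)] using this
    nlinarith [ha.1, hb.1]
  have key := MeasureTheory.integral_image_eq_integral_abs_deriv_smul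
    measurableSet_Ioo hderiv hinj
    (fun u => 1 / Real.sqrt ((1 - u^2) * (1 - (1/Real.sqrt 2)^2 * u^2)))
  rw [himg] at key
  rw [key, ← MeasureTheory.integral_const_mul]
  apply MeasureTheory.setIntegral_congr_fun measurableSet_Ioo
  intro t ht
  have ht0 := ht.1
  have ht1 := ht.2
  have h1 : (0:ℝ) < 1 - t^2 := by nlinarith
  have h2 : (0:ℝ) < 1 + t^2 := by nlinarith
  have hsq2 : (1 / Real.sqrt 2)^2 = 1/2 := by
    rw [div_pow, Real.sq_sqrt (by norm_num : (0:ℝ) ≤ 2)]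
    norm_num
  simp only [smul_eq_mul, hf, hf']
  rw [Real.sq_sqrt h1.le, hsq2]
  rw [show (1 - (1 - t^2)) * (1 - 1/2 * (1 - t^2)) = (t^2 * (1 + t^2)) * (1/2) by ring]
  rw [Real.sqrt_mul (by positivity) (1/2), Real.sqrt_mul (sq_nonneg t) (1 + t^2),
    Real.sqrt_sq ht0.le]
  rw [show (1 - t^4) = (1 - t^2) * (1 + t^2) by ring,
    Real.sqrt_mul h1.le (1 + t^2)]
  rw [abs_neg, abs_of_pos (by positivity : (0:ℝ) < t / Real.sqrt (1 - t^2))]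
  have hs1 : Real.sqrt (1 - t^2) ≠ 0 := by positivity
  have hs2 : Real.sqrt (1 + t^2) ≠ 0 := by positivity
  have hs3 : Real.sqrt (1/2) ≠ 0 := by positivity
  have hhalf : Real.sqrt (1/2) = 1 / Real.sqrt 2 := by
    rw [show (1/2 : ℝ) = (2:ℝ)⁻¹ by norm_num, Real.sqrt_inv, one_div]
  rw [hhalf]
  have hs4 : Real.sqrt 2 ≠ 0 := by positivity
  field_simp

theorem stmt9 :
    EllK (1 / Real.sqrt 2) = (Real.Gamma (1/4))^2 / (4 * Real.sqrt Real.pi) := by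
  rw [EllK, intervalIntegral.integral_of_le zero_le_one, integral_Ioc_eq_integral_Ioo,
    sub1_aux, sub2_aux, betaR_aux, Real.Gamma_one_half_eq]
  have hrefl := Real.Gamma_mul_Gamma_one_sub (1/4)
  rw [show (1:ℝ) - 1/4 = 3/4 by norm_num, show Real.pi * (1/4) = Real.pi/4 by ring,
    Real.sin_pi_div_four] at hrefl
  have hg : 0 < Real.Gamma (1/4) := Real.Gamma_pos_of_pos (by norm_num)
  have hg3 : 0 < Real.Gamma (3/4) := Real.Gamma_pos_of_pos (by norm_num)
  have hs2 : Real.sqrt 2 > 0 := by positivity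
  have hsp : Real.sqrt Real.pi > 0 := Real.sqrt_pos.mpr Real.pi_pos
  have h2 : Real.sqrt 2 * Real.sqrt 2 = 2 := Real.mul_self_sqrt (by norm_num)
  have hp : Real.sqrt Real.pi * Real.sqrt Real.pi = Real.pi := Real.mul_self_sqrt Real.pi_pos.le
  have hrefl' : Real.Gamma (1/4) * Real.Gamma (3/4) = Real.sqrt 2 * Real.pi := by
    rw [hrefl]
    field_simp
    nlinarith [Real.pi_pos]
  field_simp
  linear_combination Real.sqrt 2*hp - hrefl'
end
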